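/- arXiv:1508.03949 — 3 statements merged into one kernel-verified Lean document; each statement's English description precedes it below -/
import Mathlib

section
/- Let (A_n) be a sequence of symmetric real n×n matrices satisfying the mean-field assumption. Then there exists a sequence (Ã_n) of symmetric real n×n matrices with zero diagonal, also satisfying the mean-field assumption, such that max_{i,j∈[n]} |Ã_n(i,j)| → 0 as n → ∞, and for every q ≥ 2, symmetric real q×q matrix J and h ∈ ℝ^q: (1/n)·|Φ_n − Φ̃_n| → 0 and (1/n)·sup_{θ} |M_n(θ) − M̃_n(θ)| → 0, where Φ̃_n and M̃_n are defined by replacing A_n with Ã_n, and the supremum is over all n-tuples θ of probability vectors on {1,…,q}. -/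
open Finset Filter Real

noncomputable def pottsH {n q : ℕ} (A : Matrix (Fin n) (Fin n) ℝ)
    (J : Matrix (Fin q) (Fin q) ℝ) (h : Fin q → ℝ) (y : Fin n → Fin q) : ℝ :=
  (1 / 2) * ∑ i, ∑ j, A i j * J (y i) (y j) + ∑ i, h (y i)

noncomputable def pottsPhi {n q : ℕ} (A : Matrix (Fin n) (Fin n) ℝ)
    (J : Matrix (Fin q) (Fin q) ℝ) (h : Fin q → ℝ) : ℝ :=
  Real.log (∑ y : Fin n → Fin q, Real.exp (pottsH A J h y))

def probVec {q : ℕ} (θ : Fin q → ℝ) : Prop :=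
  (∀ r, 0 ≤ θ r) ∧ ∑ r, θ r = 1

noncomputable def meanField {n q : ℕ} (A : Matrix (Fin n) (Fin n) ℝ)
    (J : Matrix (Fin q) (Fin q) ℝ) (h : Fin q → ℝ) (θ : Fin n → Fin q → ℝ) : ℝ :=
  (1 / 2) * ∑ i, ∑ j, A i j * (∑ r, ∑ s, θ i r * θ j s * J r s)
    + ∑ i, ∑ r, h r * θ i r - ∑ i, ∑ r, θ i r * Real.log (θ i r)

def meanFieldAssumption (A : (n : ℕ) → Matrix (Fin n) (Fin n) ℝ) : Prop :=
  (∃ C : ℝ, ∀ n : ℕ, ∀ x : Fin n → ℝ, (∀ j, x j ∈ Set.Icc (0:ℝ) 1) →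
      ∑ i, |∑ j, A n i j * x j| ≤ C * n) ∧
  Tendsto (fun n : ℕ => Matrix.trace (A n * A n) / n) atTop (nhds 0)

private lemma sum_exp_pos' {ι : Type*} [Fintype ι] [Nonempty ι] (f : ι → ℝ) :
    0 < ∑ y, Real.exp (f y) :=
  Finset.sum_pos (fun y _ => Real.exp_pos _) Finset.univ_nonempty

private lemma logsumexp_le {ι : Type*} [Fintype ι] [Nonempty ι] (f g : ι → ℝ) (M : ℝ)
    (hfg : ∀ y, f y ≤ g y + M) :
    Real.log (∑ y, Real.exp (f y)) ≤ Real.log (∑ y, Real.exp (g y)) + M := by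
  have h1 : ∑ y, Real.exp (f y) ≤ (∑ y, Real.exp (g y)) * Real.exp M := by
    rw [Finset.sum_mul]
    refine Finset.sum_le_sum fun y _ => ?_
    rw [← Real.exp_add]
    exact Real.exp_le_exp.2 (hfg y)
  have h2 := Real.log_le_log (sum_exp_pos' f) h1
  rwa [Real.log_mul (ne_of_gt (sum_exp_pos' g)) (Real.exp_ne_zero M), Real.log_exp] at h2

private lemma logsumexp_lip {ι : Type*} [Fintype ι] [Nonempty ι] (f g : ι → ℝ) (M : ℝ)
    (hfg : ∀ y, |f y - g y| ≤ M) :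
    |Real.log (∑ y, Real.exp (f y)) - Real.log (∑ y, Real.exp (g y))| ≤ M := by
  rw [abs_sub_le_iff]
  constructor
  · have := logsumexp_le f g M fun y => by linarith [(abs_le.1 (hfg y)).2]
    linarith
  · have := logsumexp_le g f M fun y => by linarith [(abs_le.1 (hfg y)).1]
    linarith

private lemma diff_sum_eq {n : ℕ} (A B : Matrix (Fin n) (Fin n) ℝ) (S : Fin n → Fin n → ℝ) :
    ∑ i, ∑ j, A i j * S i j - ∑ i, ∑ j, B i j * S i j
      = ∑ i, ∑ j, (A i j - B i j) * S i j := by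
  rw [← Finset.sum_sub_distrib]
  refine Finset.sum_congr rfl fun i _ => ?_
  rw [← Finset.sum_sub_distrib]
  exact Finset.sum_congr rfl fun j _ => by ring

private lemma abs_double_sum_le {n : ℕ} (f : Fin n → Fin n → ℝ) (g : Fin n → Fin n → ℝ)
    (K : ℝ) (hg : ∀ i j, |g i j| ≤ K) :
    |∑ i, ∑ j, f i j * g i j| ≤ (∑ i, ∑ j, |f i j|) * K := by
  calc |∑ i, ∑ j, f i j * g i j| ≤ ∑ i, |∑ j, f i j * g i j| :=
        Finset.abs_sum_le_sum_abs _ _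
    _ ≤ ∑ i, ∑ j, |f i j * g i j| :=
        Finset.sum_le_sum fun i _ => Finset.abs_sum_le_sum_abs _ _
    _ ≤ ∑ i, ∑ j, |f i j| * K := by
        refine Finset.sum_le_sum fun i _ => Finset.sum_le_sum fun j _ => ?_
        rw [abs_mul]
        exact mul_le_mul_of_nonneg_left (hg i j) (abs_nonneg _)
    _ = (∑ i, ∑ j, |f i j|) * K := by rw [Finset.sum_mul]; simp [Finset.sum_mul]

theorem truncation_lemma
    (A : (n : ℕ) → Matrix (Fin n) (Fin n) ℝ) (hsymm : ∀ n, (A n).IsSymm)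
    (hMF : meanFieldAssumption A) :
    ∃ At : (n : ℕ) → Matrix (Fin n) (Fin n) ℝ,
      (∀ n, (At n).IsSymm) ∧
      (∀ n : ℕ, ∀ i : Fin n, At n i i = 0) ∧
      meanFieldAssumption At ∧
      Tendsto (fun n : ℕ => ⨆ i : Fin n, ⨆ j : Fin n, |At n i j|) atTop (nhds 0) ∧
      (∀ q : ℕ, 2 ≤ q → ∀ J : Matrix (Fin q) (Fin q) ℝ, J.IsSymm → ∀ h : Fin q → ℝ,
        Tendsto (fun n : ℕ => |pottsPhi (A n) J h - pottsPhi (At n) J h| / n)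
          atTop (nhds 0) ∧
        Tendsto (fun n : ℕ =>
            sSup {x | ∃ θ : Fin n → Fin q → ℝ, (∀ i, probVec (θ i)) ∧
              x = |meanField (A n) J h θ - meanField (At n) J h θ|} / n)
          atTop (nhds 0)) := by
  obtain ⟨⟨C, hC⟩, htrace⟩ := hMF
  -- basic quantities
  set t : ℕ → ℝ := fun n => Matrix.trace (A n * A n) / n with ht_def
  have htr_eq : ∀ n, Matrix.trace (A n * A n) = ∑ i, ∑ j, (A n i j)^2 := by
    intro n
    rw [Matrix.trace]
    simp only [Matrix.diag, Matrix.mul_apply]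
    refine Finset.sum_congr rfl fun i _ => Finset.sum_congr rfl fun j _ => ?_
    rw [(hsymm n).apply i j]
    ring
  have htr_nonneg : ∀ n, 0 ≤ Matrix.trace (A n * A n) := by
    intro n
    rw [htr_eq n]
    exact Finset.sum_nonneg fun i _ => Finset.sum_nonneg fun j _ => sq_nonneg _
  have ht_nonneg : ∀ n, 0 ≤ t n := fun n => div_nonneg (htr_nonneg n) (Nat.cast_nonneg n)
  set ε : ℕ → ℝ := fun n => Real.sqrt (t n) with hε_def
  have hε_nonneg : ∀ n, 0 ≤ ε n := fun n => Real.sqrt_nonneg _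
  have hε_sq : ∀ n, ε n ^ 2 = t n := fun n => Real.sq_sqrt (ht_nonneg n)
  have hε_tendsto : Tendsto ε atTop (nhds 0) := by
    have := htrace.sqrt
    rwa [Real.sqrt_zero] at this
  -- the truncated matrices
  set At : (n : ℕ) → Matrix (Fin n) (Fin n) ℝ := fun n =>
    Matrix.of fun i j => if i = j ∨ ε n < |A n i j| then 0 else A n i j with hAt_def
  have hAt_apply : ∀ n (i j : Fin n),
      At n i j = if i = j ∨ ε n < |A n i j| then 0 else A n i j := fun n i j => rfl
  have hAt_symm : ∀ n, (At n).IsSymm := by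
    intro n
    ext i j
    rw [Matrix.transpose_apply, hAt_apply, hAt_apply, (hsymm n).apply i j]
    by_cases hij : i = j
    · simp [hij]
    · simp [hij, Ne.symm hij]
  have hAt_diag : ∀ n, ∀ i : Fin n, At n i i = 0 := by
    intro n i; rw [hAt_apply]; simp
  have hAt_abs_le : ∀ n (i j : Fin n), |At n i j| ≤ ε n := by
    intro n i j
    rw [hAt_apply]
    split_ifs with hc
    · simpa using hε_nonneg n
    · push_neg at hc
      exact hc.2
  -- the key deviation quantity
  set D : ℕ → ℝ := fun n => ∑ i, ∑ j, |A n i j - At n i j| with hD_def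
  have hD_nonneg : ∀ n, 0 ≤ D n :=
    fun n => Finset.sum_nonneg fun i _ => Finset.sum_nonneg fun j _ => abs_nonneg _
  have hdiff : ∀ n (i j : Fin n),
      |A n i j - At n i j| = if i = j ∨ ε n < |A n i j| then |A n i j| else 0 := by
    intro n i j
    rw [hAt_apply]
    split_ifs with hc
    · simp
    · simp
  have hD_le : ∀ n, D n ≤ 2 * n * ε n := by
    intro n
    have step : D n ≤ (∑ i, |A n i i|)
        + ∑ i : Fin n, ∑ j : Fin n, (if ε n < |A n i j| then |A n i j| else 0) := by
      have : D n = ∑ i : Fin n, ∑ j : Fin n,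
          (if i = j ∨ ε n < |A n i j| then |A n i j| else 0) := by
        rw [hD_def]
        exact Finset.sum_congr rfl fun i _ => Finset.sum_congr rfl fun j _ => hdiff n i j
      rw [this]
      have hdiag : (∑ i, |A n i i|)
          = ∑ i : Fin n, ∑ j : Fin n, (if i = j then |A n i j| else 0) := by
        refine Finset.sum_congr rfl fun i _ => ?_
        rw [Finset.sum_ite_eq (Finset.univ) i (fun j => |A n i j|)]
        simp
      rw [hdiag, ← Finset.sum_add_distrib]
      refine Finset.sum_le_sum fun i _ => ?_
      rw [← Finset.sum_add_distrib]
      refine Finset.sum_le_sum fun j _ => ?_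
      by_cases h1 : i = j <;> by_cases h2 : ε n < |A n i j| <;>
        simp [h1, h2, abs_nonneg] <;> split_ifs <;> simp [abs_nonneg]
    have hdiag_le : (∑ i, |A n i i|) ≤ n * ε n := by
      have hcs := Finset.sum_mul_sq_le_sq_mul_sq Finset.univ (fun _ : Fin n => (1:ℝ))
        (fun i => |A n i i|)
      simp only [one_mul, one_pow, Finset.sum_const, Finset.card_univ, Fintype.card_fin,
        nsmul_eq_mul, mul_one] at hcs
      have h1 : ∑ i, |A n i i|^2 ≤ Matrix.trace (A n * A n) := by
        rw [htr_eq n]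
        refine Finset.sum_le_sum fun i _ => ?_
        rw [sq_abs]
        exact Finset.single_le_sum (f := fun j => (A n i j)^2)
          (fun j _ => sq_nonneg _) (Finset.mem_univ i)
      have h2 : (∑ i, |A n i i|)^2 ≤ (n * ε n)^2 := by
        calc (∑ i, |A n i i|)^2 ≤ n * ∑ i, |A n i i|^2 := hcs
          _ ≤ n * Matrix.trace (A n * A n) := by
              exact mul_le_mul_of_nonneg_left h1 (Nat.cast_nonneg n)
          _ ≤ (n * ε n)^2 := by
              rcases Nat.eq_zero_or_pos n with h0 | hn
              · subst h0; simp [htr_eq]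
              · have hn' : (0:ℝ) < n := by exact_mod_cast hn
                have : Matrix.trace (A n * A n) = n * t n := by
                  rw [ht_def]; field_simp
                rw [this, mul_pow, ← hε_sq n]
                ring_nf
                exact le_of_eq (by ring)
      have hsum_nonneg : 0 ≤ ∑ i, |A n i i| :=
        Finset.sum_nonneg fun i _ => abs_nonneg _
      have hne_nonneg : 0 ≤ (n:ℝ) * ε n :=
        mul_nonneg (Nat.cast_nonneg n) (hε_nonneg n)
      exact (pow_le_pow_iff_left₀ hsum_nonneg hne_nonneg two_ne_zero).1 h2
    have hoff_le : (∑ i : Fin n, ∑ j : Fin n, (if ε n < |A n i j| then |A n i j| else 0))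
        ≤ n * ε n := by
      rcases eq_or_lt_of_le (ht_nonneg n) with h0 | hpos
      · -- t n = 0, so all entries vanish (for n > 0) or sums empty
        rcases Nat.eq_zero_or_pos n with hn0 | hn
        · subst hn0; simp
        · have hn' : (0:ℝ) < n := by exact_mod_cast hn
          have htr0 : Matrix.trace (A n * A n) = 0 := by
            have : t n = 0 := h0.symm
            rw [ht_def] at this
            field_simp at this
            simpa using this
          have hzero : ∀ i j : Fin n, A n i j = 0 := by
            intro i j
            have h1 : ∑ i, ∑ j, (A n i j)^2 = 0 := by rw [← htr_eq n]; exact htr0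
            have h2 := (Finset.sum_eq_zero_iff_of_nonneg
              (fun i _ => Finset.sum_nonneg fun j _ => sq_nonneg (A n i j))).1 h1 i
              (Finset.mem_univ i)
            have h3 := (Finset.sum_eq_zero_iff_of_nonneg
              (fun j _ => sq_nonneg (A n i j))).1 h2 j (Finset.mem_univ j)
            exact pow_eq_zero_iff two_ne_zero |>.1 h3
          have : ∀ i j : Fin n, (if ε n < |A n i j| then |A n i j| else 0) = 0 := by
            intro i j
            rw [hzero i j]
            simp [hε_nonneg n, not_lt.2 (hε_nonneg n)]
          simp only [this, Finset.sum_const_zero]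
          exact mul_nonneg (Nat.cast_nonneg n) (hε_nonneg n)
      · have hεpos : 0 < ε n := Real.sqrt_pos.2 hpos
        have hterm : ∀ i j : Fin n,
            (if ε n < |A n i j| then |A n i j| else 0) ≤ (A n i j)^2 / ε n := by
          intro i j
          split_ifs with hc
          · rw [le_div_iff₀ hεpos]
            calc |A n i j| * ε n ≤ |A n i j| * |A n i j| :=
                  mul_le_mul_of_nonneg_left hc.le (abs_nonneg _)
              _ = (A n i j)^2 := by rw [← sq_abs]; ring
          · positivity
        calc (∑ i : Fin n, ∑ j : Fin n, (if ε n < |A n i j| then |A n i j| else 0))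
            ≤ ∑ i : Fin n, ∑ j : Fin n, (A n i j)^2 / ε n :=
              Finset.sum_le_sum fun i _ => Finset.sum_le_sum fun j _ => hterm i j
          _ = Matrix.trace (A n * A n) / ε n := by
              rw [htr_eq n, Finset.sum_div]
              exact Finset.sum_congr rfl fun i _ => (Finset.sum_div _ _ _).symm
          _ ≤ n * ε n := by
              rcases Nat.eq_zero_or_pos n with hn0 | hn
              · subst hn0
                simp [htr_eq]
              · have hn' : (0:ℝ) < n := by exact_mod_cast hn
                have htn : Matrix.trace (A n * A n) = n * t n := by
                  rw [ht_def]; field_simp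
                rw [htn, ← hε_sq n]
                rw [div_le_iff₀ hεpos]
                ring_nf
                exact le_of_eq (by ring)
    calc D n ≤ (∑ i, |A n i i|)
        + ∑ i : Fin n, ∑ j : Fin n, (if ε n < |A n i j| then |A n i j| else 0) := step
      _ ≤ n * ε n + n * ε n := add_le_add hdiag_le hoff_le
      _ = 2 * n * ε n := by ring
  -- boundedness of ε
  obtain ⟨B, hB⟩ : ∃ B : ℝ, ∀ n, ε n ≤ B := by
    obtain ⟨B, hB⟩ := hε_tendsto.bddAbove_range
    exact ⟨B, fun n => hB (Set.mem_range_self n)⟩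
  have hB0 : 0 ≤ B := le_trans (hε_nonneg 0) (hB 0)
  refine ⟨At, hAt_symm, hAt_diag, ⟨⟨C + 2 * B, ?_⟩, ?_⟩, ?_, ?_⟩
  · -- mean field condition (i)
    intro n x hx
    have hxabs : ∀ j, |x j| ≤ 1 := by
      intro j
      obtain ⟨h1, h2⟩ := hx j
      rw [abs_of_nonneg h1]; exact h2
    have key : ∀ i : Fin n, |∑ j, At n i j * x j|
        ≤ |∑ j, A n i j * x j| + ∑ j, |A n i j - At n i j| := by
      intro i
      have heq : ∑ j, At n i j * x j
          = ∑ j, A n i j * x j - ∑ j, (A n i j - At n i j) * x j := by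
        rw [← Finset.sum_sub_distrib]
        exact Finset.sum_congr rfl fun j _ => by ring
      rw [heq]
      refine le_trans (abs_sub _ _) ?_
      gcongr
      calc |∑ j, (A n i j - At n i j) * x j| ≤ ∑ j, |(A n i j - At n i j) * x j| :=
            Finset.abs_sum_le_sum_abs _ _
        _ ≤ ∑ j, |A n i j - At n i j| := by
            refine Finset.sum_le_sum fun j _ => ?_
            rw [abs_mul]
            calc |A n i j - At n i j| * |x j| ≤ |A n i j - At n i j| * 1 :=
                  mul_le_mul_of_nonneg_left (hxabs j) (abs_nonneg _)
              _ = |A n i j - At n i j| := mul_one _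
    calc ∑ i, |∑ j, At n i j * x j|
        ≤ ∑ i, (|∑ j, A n i j * x j| + ∑ j, |A n i j - At n i j|) :=
          Finset.sum_le_sum fun i _ => key i
      _ = (∑ i, |∑ j, A n i j * x j|) + D n := by rw [Finset.sum_add_distrib]
      _ ≤ C * n + 2 * n * ε n := add_le_add (hC n x hx) (hD_le n)
      _ ≤ C * n + 2 * n * B := by
          have := hB n
          have : 2 * (n:ℝ) * ε n ≤ 2 * n * B := by
            apply mul_le_mul_of_nonneg_left (hB n)
            positivity
          linarith
      _ = (C + 2 * B) * n := by ring
  · -- mean field condition (ii)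
    have hle : ∀ n, Matrix.trace (At n * At n) / n ≤ t n := by
      intro n
      have h1 : Matrix.trace (At n * At n) ≤ Matrix.trace (A n * A n) := by
        have hA2 : Matrix.trace (At n * At n) = ∑ i, ∑ j, (At n i j)^2 := by
          rw [Matrix.trace]
          simp only [Matrix.diag, Matrix.mul_apply]
          refine Finset.sum_congr rfl fun i _ => Finset.sum_congr rfl fun j _ => ?_
          rw [(hAt_symm n).apply i j]
          ring
        rw [hA2, htr_eq n]
        refine Finset.sum_le_sum fun i _ => Finset.sum_le_sum fun j _ => ?_
        rw [hAt_apply]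
        split_ifs
        · simpa using sq_nonneg (A n i j)
        · exact le_rfl
      rcases Nat.eq_zero_or_pos n with h0 | hn
      · subst h0; simp [ht_def]
      · have hn' : (0:ℝ) < n := by exact_mod_cast hn
        rw [ht_def]
        exact div_le_div_of_nonneg_right h1 hn'.le
    have hge : ∀ n, 0 ≤ Matrix.trace (At n * At n) / n := by
      intro n
      apply div_nonneg _ (Nat.cast_nonneg n)
      have hA2 : Matrix.trace (At n * At n) = ∑ i, ∑ j, (At n i j)^2 := by
        rw [Matrix.trace]
        simp only [Matrix.diag, Matrix.mul_apply]
        refine Finset.sum_congr rfl fun i _ => Finset.sum_congr rfl fun j _ => ?_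
        rw [(hAt_symm n).apply i j]
        ring
      rw [hA2]
      positivity
    exact tendsto_of_tendsto_of_tendsto_of_le_of_le tendsto_const_nhds htrace hge hle
  · -- sup of entries tends to 0
    have hupper : ∀ n, (⨆ i : Fin n, ⨆ j : Fin n, |At n i j|) ≤ ε n := by
      intro n
      rcases Nat.eq_zero_or_pos n with h0 | hn
      · subst h0
        rw [show (⨆ i : Fin 0, ⨆ j : Fin 0, |At 0 i j|) = 0 from Real.iSup_of_isEmpty _]
        exact hε_nonneg 0
      · haveI : Nonempty (Fin n) := Fin.pos_iff_nonempty.1 hn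
        exact ciSup_le fun i => ciSup_le fun j => hAt_abs_le n i j
    have hlower : ∀ n, 0 ≤ ⨆ i : Fin n, ⨆ j : Fin n, |At n i j| := by
      intro n
      rcases Nat.eq_zero_or_pos n with h0 | hn
      · subst h0
        rw [show (⨆ i : Fin 0, ⨆ j : Fin 0, |At 0 i j|) = 0 from Real.iSup_of_isEmpty _]
      · haveI : Nonempty (Fin n) := Fin.pos_iff_nonempty.1 hn
        obtain ⟨i⟩ := (inferInstance : Nonempty (Fin n))
        have hb1 : BddAbove (Set.range fun j : Fin n => |At n i j|) :=
          Set.Finite.bddAbove (Set.finite_range _)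
        have hb2 : BddAbove (Set.range fun i : Fin n => ⨆ j : Fin n, |At n i j|) :=
          Set.Finite.bddAbove (Set.finite_range _)
        calc (0:ℝ) ≤ |At n i i| := abs_nonneg _
          _ ≤ ⨆ j : Fin n, |At n i j| := le_ciSup hb1 i
          _ ≤ ⨆ i : Fin n, ⨆ j : Fin n, |At n i j| := le_ciSup hb2 i
    exact tendsto_of_tendsto_of_tendsto_of_le_of_le tendsto_const_nhds hε_tendsto
      hlower hupper
  · -- the Potts statements
    intro q hq J _hJ h
    haveI : Nonempty (Fin q) := Fin.pos_iff_nonempty.1 (by omega)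
    set KJ : ℝ := ∑ r, ∑ s, |J r s| with hKJ_def
    have hKJ0 : 0 ≤ KJ := Finset.sum_nonneg fun r _ => Finset.sum_nonneg fun s _ => abs_nonneg _
    have hKJ : ∀ r s, |J r s| ≤ KJ := by
      intro r s
      calc |J r s| ≤ ∑ s', |J r s'| :=
            Finset.single_le_sum (f := fun s' => |J r s'|)
              (fun _ _ => abs_nonneg _) (Finset.mem_univ s)
        _ ≤ KJ :=
            Finset.single_le_sum (f := fun r' => ∑ s', |J r' s'|)
              (fun _ _ => Finset.sum_nonneg fun _ _ => abs_nonneg _) (Finset.mem_univ r)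
    have hbound_tendsto : Tendsto (fun n : ℕ => 2 * ε n * KJ) atTop (nhds 0) := by
      have := (hε_tendsto.const_mul 2).mul_const KJ
      simpa using this
    constructor
    · -- Phi part
      have hPhi_bound : ∀ n, |pottsPhi (A n) J h - pottsPhi (At n) J h| ≤ D n * KJ := by
        intro n
        refine logsumexp_lip _ _ _ fun y => ?_
        have hHdiff : pottsH (A n) J h y - pottsH (At n) J h y
            = (1/2) * ∑ i, ∑ j, (A n i j - At n i j) * J (y i) (y j) := by
          simp only [pottsH]
          rw [← diff_sum_eq]
          ring
        rw [hHdiff, abs_mul]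
        have h1 : |∑ i, ∑ j, (A n i j - At n i j) * J (y i) (y j)| ≤ D n * KJ :=
          abs_double_sum_le _ _ KJ fun i j => hKJ (y i) (y j)
        have h2 : |(1:ℝ)/2| = 1/2 := by norm_num
        rw [h2]
        nlinarith [abs_nonneg (∑ i, ∑ j, (A n i j - At n i j) * J (y i) (y j))]
      refine tendsto_of_tendsto_of_tendsto_of_le_of_le tendsto_const_nhds hbound_tendsto
        (fun n => div_nonneg (abs_nonneg _) (Nat.cast_nonneg n)) (fun n => ?_)
      rcases Nat.eq_zero_or_pos n with h0 | hn
      · subst h0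
        simp only [Nat.cast_zero, div_zero]
        exact mul_nonneg (mul_nonneg (by norm_num) (hε_nonneg 0)) hKJ0
      · have hn' : (0:ℝ) < n := by exact_mod_cast hn
        rw [div_le_iff₀ hn']
        calc |pottsPhi (A n) J h - pottsPhi (At n) J h| ≤ D n * KJ := hPhi_bound n
          _ ≤ (2 * n * ε n) * KJ := mul_le_mul_of_nonneg_right (hD_le n) hKJ0
          _ = 2 * ε n * KJ * n := by ring
    · -- mean field part
      have hM_bound : ∀ n (θ : Fin n → Fin q → ℝ), (∀ i, probVec (θ i)) →
          |meanField (A n) J h θ - meanField (At n) J h θ| ≤ D n * KJ := by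
        intro n θ hθ
        have hS : ∀ i j : Fin n, |∑ r, ∑ s, θ i r * θ j s * J r s| ≤ KJ := by
          intro i j
          calc |∑ r, ∑ s, θ i r * θ j s * J r s|
              ≤ ∑ r, ∑ s, |θ i r * θ j s * J r s| := by
                refine le_trans (Finset.abs_sum_le_sum_abs _ _) ?_
                exact Finset.sum_le_sum fun r _ => Finset.abs_sum_le_sum_abs _ _
            _ ≤ ∑ r, ∑ s, θ i r * θ j s * KJ := by
                refine Finset.sum_le_sum fun r _ => Finset.sum_le_sum fun s _ => ?_
                rw [abs_mul, abs_mul, abs_of_nonneg ((hθ i).1 r), abs_of_nonneg ((hθ j).1 s)]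
                exact mul_le_mul_of_nonneg_left (hKJ r s)
                  (mul_nonneg ((hθ i).1 r) ((hθ j).1 s))
            _ = (∑ r, θ i r) * (∑ s, θ j s) * KJ := by
                rw [Finset.sum_mul_sum, Finset.sum_mul]
                refine Finset.sum_congr rfl fun r _ => ?_
                rw [Finset.sum_mul]
            _ = KJ := by rw [(hθ i).2, (hθ j).2]; ring
        have hMdiff : meanField (A n) J h θ - meanField (At n) J h θ
            = (1/2) * ∑ i, ∑ j, (A n i j - At n i j)
                * (∑ r, ∑ s, θ i r * θ j s * J r s) := by
          simp only [meanField]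
          rw [← diff_sum_eq]
          ring
        rw [hMdiff, abs_mul]
        have h1 : |∑ i, ∑ j, (A n i j - At n i j) * (∑ r, ∑ s, θ i r * θ j s * J r s)|
            ≤ D n * KJ := abs_double_sum_le _ _ KJ hS
        have h2 : |(1:ℝ)/2| = 1/2 := by norm_num
        rw [h2]
        nlinarith [abs_nonneg (∑ i, ∑ j, (A n i j - At n i j)
          * (∑ r, ∑ s, θ i r * θ j s * J r s))]
      -- the set, its boundedness, nonemptiness
      have hqne : (q:ℝ) ≠ 0 := by positivity
      have hθunif : ∀ n, ∀ i : Fin n, probVec (fun _ : Fin q => (q:ℝ)⁻¹) := by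
        intro n i
        constructor
        · intro r; positivity
        · simp [Finset.sum_const, Finset.card_univ]
          field_simp
      have hmem : ∀ n, |meanField (A n) J h (fun _ _ => (q:ℝ)⁻¹)
          - meanField (At n) J h (fun _ _ => (q:ℝ)⁻¹)| ∈
          {x | ∃ θ : Fin n → Fin q → ℝ, (∀ i, probVec (θ i)) ∧
            x = |meanField (A n) J h θ - meanField (At n) J h θ|} :=
        fun n => ⟨fun _ _ => (q:ℝ)⁻¹, hθunif n, rfl⟩
      have hbdd : ∀ n, ∀ x ∈ {x | ∃ θ : Fin n → Fin q → ℝ, (∀ i, probVec (θ i)) ∧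
          x = |meanField (A n) J h θ - meanField (At n) J h θ|}, x ≤ D n * KJ := by
        rintro n x ⟨θ, hθ, rfl⟩
        exact hM_bound n θ hθ
      have hsSup_le : ∀ n, sSup {x | ∃ θ : Fin n → Fin q → ℝ, (∀ i, probVec (θ i)) ∧
          x = |meanField (A n) J h θ - meanField (At n) J h θ|} ≤ D n * KJ := by
        intro n
        exact Real.sSup_le (hbdd n) (mul_nonneg (hD_nonneg n) hKJ0)
      have hsSup_nonneg : ∀ n, 0 ≤ sSup {x | ∃ θ : Fin n → Fin q → ℝ,
          (∀ i, probVec (θ i)) ∧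
          x = |meanField (A n) J h θ - meanField (At n) J h θ|} := by
        intro n
        refine le_trans (abs_nonneg _) (le_csSup ⟨D n * KJ, fun x hx => hbdd n x hx⟩ (hmem n))
      refine tendsto_of_tendsto_of_tendsto_of_le_of_le tendsto_const_nhds hbound_tendsto
        (fun n => div_nonneg (hsSup_nonneg n) (Nat.cast_nonneg n)) (fun n => ?_)
      rcases Nat.eq_zero_or_pos n with h0 | hn
      · subst h0
        simp only [Nat.cast_zero, div_zero]
        exact mul_nonneg (mul_nonneg (by norm_num) (hε_nonneg 0)) hKJ0
      · have hn' : (0:ℝ) < n := by exact_mod_cast hn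
        rw [div_le_iff₀ hn']
        calc sSup _ ≤ D n * KJ := hsSup_le n
          _ ≤ (2 * n * ε n) * KJ := mul_le_mul_of_nonneg_right (hD_le n) hKJ0
          _ = 2 * ε n * KJ * n := by ring
end

section
/- Let (A_n) be a sequence of symmetric real n×n matrices satisfying the mean-field assumption, with A_n(i,i) = 0 for all i and max_{i,j∈[n]} |A_n(i,j)| → 0 as n → ∞. Let Y be a random element of {1,…,q}^n with law μ_n, and let X, X̂, γ and F_n be as defined in the context. Then (1/n²)·E_{μ_n}[ (F_n(X) − F_n(X̂))² ] → 0 as n → ∞. -/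
open Finset Filter Real

/-- The Potts probability mass function `μ_n(y) = exp(H(y)) / Σ_{y'} exp(H(y'))`. -/
noncomputable def pottsWeight {n q : ℕ} (A : Matrix (Fin n) (Fin n) ℝ)
    (J : Matrix (Fin q) (Fin q) ℝ) (h : Fin q → ℝ) (y : Fin n → Fin q) : ℝ :=
  Real.exp (pottsH A J h y) / ∑ y' : Fin n → Fin q, Real.exp (pottsH A J h y')

/-- The 0/1 encoding `x_{ir} = 1{y_i = r}` of a configuration. -/
noncomputable def xVec {n q : ℕ} (y : Fin n → Fin q) : Fin n → Fin q → ℝ :=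
  fun i r => if y i = r then 1 else 0

/-- `γ_{ir}(z) = Σ_s J(r,s) Σ_j A(i,j) z_{js}`. -/
noncomputable def gam {n q : ℕ} (A : Matrix (Fin n) (Fin n) ℝ)
    (J : Matrix (Fin q) (Fin q) ℝ) (z : Fin n → Fin q → ℝ) (i : Fin n) (r : Fin q) : ℝ :=
  ∑ s, J r s * ∑ j, A i j * z j s

/-- The conditional expectation vector `x̂`. -/
noncomputable def xHat {n q : ℕ} (A : Matrix (Fin n) (Fin n) ℝ)
    (J : Matrix (Fin q) (Fin q) ℝ) (h : Fin q → ℝ) (y : Fin n → Fin q)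
    (i : Fin n) (r : Fin q) : ℝ :=
  Real.exp (gam A J (xVec y) i r + h r) / ∑ s, Real.exp (gam A J (xVec y) i s + h s)

/-- The quadratic part of the Hamiltonian, as a function on `[0,1]^{n×q}`. -/
noncomputable def Fquad {n q : ℕ} (A : Matrix (Fin n) (Fin n) ℝ)
    (J : Matrix (Fin q) (Fin q) ℝ) (z : Fin n → Fin q → ℝ) : ℝ :=
  (1 / 2) * ∑ i, ∑ j, A i j * ∑ r, ∑ s, J r s * z i r * z j s

set_option maxHeartbeats 1000000

namespace PottsProof
open Function

variable {n q : ℕ} [NeZero q]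

section Basics
variable (A : Matrix (Fin n) (Fin n) ℝ) (J : Matrix (Fin q) (Fin q) ℝ) (h : Fin q → ℝ)

noncomputable def Ex (f : (Fin n → Fin q) → ℝ) : ℝ := ∑ y, pottsWeight A J h y * f y

lemma Zpos : 0 < ∑ y' : Fin n → Fin q, Real.exp (pottsH A J h y') :=
  Finset.sum_pos (fun y _ => Real.exp_pos _) Finset.univ_nonempty

lemma weight_nonneg (y : Fin n → Fin q) : 0 ≤ pottsWeight A J h y :=
  div_nonneg (Real.exp_pos _).le (Zpos A J h).le

lemma weight_sum : ∑ y : Fin n → Fin q, pottsWeight A J h y = 1 := by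
  unfold pottsWeight
  rw [← Finset.sum_div, div_eq_one_iff_eq (Zpos A J h).ne']

lemma Ex_mono {f g : (Fin n → Fin q) → ℝ} (hfg : ∀ y, f y ≤ g y) : Ex A J h f ≤ Ex A J h g :=
  Finset.sum_le_sum fun y _ => mul_le_mul_of_nonneg_left (hfg y) (weight_nonneg A J h y)

lemma Ex_const (c : ℝ) : Ex A J h (fun _ => c) = c := by
  unfold Ex
  rw [← Finset.sum_mul, weight_sum, one_mul]

lemma Ex_nonneg {f : (Fin n → Fin q) → ℝ} (hf : ∀ y, 0 ≤ f y) : 0 ≤ Ex A J h f := by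
  have := Ex_mono A J h (f := fun _ => 0) (g := f) hf
  rwa [Ex_const] at this

lemma Ex_abs_le {f : (Fin n → Fin q) → ℝ} : |Ex A J h f| ≤ Ex A J h (fun y => |f y|) := by
  refine (Finset.abs_sum_le_sum_abs _ _).trans (le_of_eq ?_)
  refine Finset.sum_congr rfl fun y _ => ?_
  rw [abs_mul, abs_of_nonneg (weight_nonneg A J h y)]

lemma Ex_le_const {f : (Fin n → Fin q) → ℝ} {c : ℝ} (hf : ∀ y, f y ≤ c) :
    Ex A J h f ≤ c := by
  have := Ex_mono A J h (g := fun _ => c) hf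
  rwa [Ex_const] at this

lemma xHat_nonneg (y : Fin n → Fin q) (i : Fin n) (r : Fin q) : 0 ≤ xHat A J h y i r :=
  div_nonneg (Real.exp_pos _).le
    (Finset.sum_pos (fun s _ => Real.exp_pos _) Finset.univ_nonempty).le

lemma xHat_le_one (y : Fin n → Fin q) (i : Fin n) (r : Fin q) : xHat A J h y i r ≤ 1 := by
  unfold xHat
  exact div_le_one_of_le₀
    (Finset.single_le_sum (f := fun s => Real.exp (gam A J (xVec y) i s + h s))
      (fun s _ => (Real.exp_pos _).le) (Finset.mem_univ r))
    (Finset.sum_nonneg fun s _ => (Real.exp_pos _).le)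

omit [NeZero q] in
lemma xVec_nonneg (y : Fin n → Fin q) (i : Fin n) (r : Fin q) : 0 ≤ xVec y i r := by
  by_cases H : y i = r <;> simp [xVec, H]

omit [NeZero q] in
lemma xVec_le_one (y : Fin n → Fin q) (i : Fin n) (r : Fin q) : xVec y i r ≤ 1 := by
  by_cases H : y i = r <;> simp [xVec, H]

end Basics
end PottsProof
namespace PottsProof
open Function

variable {n q : ℕ} [NeZero q]

section Defs
variable (A : Matrix (Fin n) (Fin n) ℝ) (J : Matrix (Fin q) (Fin q) ℝ) (h : Fin q → ℝ)

noncomputable def Dd (y : Fin n → Fin q) (i : Fin n) (r : Fin q) : ℝ :=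
  xVec y i r - xHat A J h y i r

noncomputable def Gg (y : Fin n → Fin q) (i : Fin n) (r : Fin q) : ℝ :=
  gam A J (xVec y) i r + gam A J (xHat A J h y) i r

noncomputable def uu (y : Fin n → Fin q) (i : Fin n) : ℝ :=
  ∑ r, Dd A J h y i r * Gg A J h y i r

noncomputable def mm (y : Fin n → Fin q) (i : Fin n) : ℝ :=
  ∑ r, (|gam A J (xVec y) i r| + |gam A J (xHat A J h y) i r|)

noncomputable def Js : ℝ := (∑ r, ∑ s, |J r s|) + 1

noncomputable def Pm (k i : Fin n) : ℝ := ∑ j, |A k j| * |A j i|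

noncomputable def rho (i : Fin n) : ℝ := ∑ j, (A i j)^2

noncomputable def alp : ℝ := ⨆ i : Fin n, ⨆ j : Fin n, |A i j|

omit [NeZero q] in
lemma Js_ge_one : 1 ≤ Js J := by
  have : 0 ≤ ∑ r, ∑ s, |J r s| :=
    Finset.sum_nonneg fun r _ => Finset.sum_nonneg fun s _ => abs_nonneg _
  unfold Js; linarith

omit [NeZero q] in
lemma Js_pos : 0 < Js J := lt_of_lt_of_le one_pos (Js_ge_one J)

omit [NeZero q] in
lemma Js_row (r : Fin q) : ∑ s, |J r s| ≤ Js J := by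
  unfold Js
  have h1 : ∑ s, |J r s| ≤ ∑ r, ∑ s, |J r s| :=
    Finset.single_le_sum (f := fun r => ∑ s, |J r s|)
      (fun r _ => Finset.sum_nonneg fun s _ => abs_nonneg _) (Finset.mem_univ r)
  linarith

omit [NeZero q] in
lemma alp_nonneg : 0 ≤ alp A := by
  apply Real.iSup_nonneg; intro i
  apply Real.iSup_nonneg; intro j
  exact abs_nonneg _

omit [NeZero q] in
lemma abs_le_alp (i j : Fin n) : |A i j| ≤ alp A := by
  have h1 : |A i j| ≤ ⨆ j : Fin n, |A i j| :=
    le_ciSup (f := fun j => |A i j|) (Set.Finite.bddAbove (Set.finite_range _)) j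
  exact h1.trans (le_ciSup (f := fun i => ⨆ j : Fin n, |A i j|)
    (Set.Finite.bddAbove (Set.finite_range _)) i)

omit [NeZero q] in
lemma Pm_nonneg (k i : Fin n) : 0 ≤ Pm A k i :=
  Finset.sum_nonneg fun j _ => mul_nonneg (abs_nonneg _) (abs_nonneg _)

omit [NeZero q] in
lemma rho_nonneg (i : Fin n) : 0 ≤ rho A i := Finset.sum_nonneg fun j _ => sq_nonneg _

omit [NeZero q] in
lemma Pm_symm (hA : A.IsSymm) (k i : Fin n) : Pm A k i = Pm A i k := by
  unfold Pm
  refine Finset.sum_congr rfl fun j _ => ?_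
  rw [← hA.apply j k, ← hA.apply i j, mul_comm]

omit [NeZero q] in
lemma Pm_self (hA : A.IsSymm) (i : Fin n) : Pm A i i = rho A i := by
  unfold Pm rho
  refine Finset.sum_congr rfl fun j _ => ?_
  rw [← hA.apply j i, abs_mul_abs_self, sq]

lemma Dd_abs_le_one (y : Fin n → Fin q) (i : Fin n) (r : Fin q) : |Dd A J h y i r| ≤ 1 := by
  rw [abs_le]
  constructor
  · have := xHat_le_one A J h y i r
    have := xVec_nonneg y i r
    unfold Dd; linarith
  · have := xHat_nonneg A J h y i r
    have := xVec_le_one y i r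
    unfold Dd; linarith

lemma Gg_abs_le (y : Fin n → Fin q) (i : Fin n) (r : Fin q) :
    |Gg A J h y i r| ≤ |gam A J (xVec y) i r| + |gam A J (xHat A J h y) i r| := abs_add_le _ _

lemma uu_abs_le_mm (y : Fin n → Fin q) (i : Fin n) : |uu A J h y i| ≤ mm A J h y i := by
  refine (Finset.abs_sum_le_sum_abs _ _).trans (Finset.sum_le_sum fun r _ => ?_)
  rw [abs_mul]
  calc |Dd A J h y i r| * |Gg A J h y i r| ≤ 1 * |Gg A J h y i r| := by
        exact mul_le_mul_of_nonneg_right (Dd_abs_le_one A J h y i r) (abs_nonneg _)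
    _ = |Gg A J h y i r| := one_mul _
    _ ≤ _ := Gg_abs_le A J h y i r

lemma mm_nonneg (y : Fin n → Fin q) (i : Fin n) : 0 ≤ mm A J h y i :=
  Finset.sum_nonneg fun r _ => add_nonneg (abs_nonneg _) (abs_nonneg _)

end Defs
end PottsProof
namespace PottsProof
open Function

variable {n q : ℕ} [NeZero q]

section Diffs
variable (A : Matrix (Fin n) (Fin n) ℝ) (J : Matrix (Fin q) (Fin q) ℝ) (h : Fin q → ℝ)

omit [NeZero q] in
lemma gam_sub (z z' : Fin n → Fin q → ℝ) (i : Fin n) (r : Fin q) :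
    gam A J z i r - gam A J z' i r = ∑ s, J r s * ∑ j, A i j * (z j s - z' j s) := by
  unfold gam
  rw [← Finset.sum_sub_distrib]
  refine Finset.sum_congr rfl fun s _ => ?_
  rw [← mul_sub, ← Finset.sum_sub_distrib]
  congr 1
  refine Finset.sum_congr rfl fun j _ => ?_
  rw [mul_sub]

omit [NeZero q] in
lemma gam_xVec_update_sub (y : Fin n → Fin q) (i : Fin n) (c : Fin q) (k : Fin n) (r : Fin q) :
    gam A J (xVec (Function.update y i c)) k r - gam A J (xVec y) k r
      = ∑ s, J r s * (A k i * (xVec (Function.update y i c) i s - xVec y i s)) := by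
  rw [gam_sub]
  refine Finset.sum_congr rfl fun s _ => ?_
  congr 1
  rw [Finset.sum_eq_single i]
  · intro j _ hj
    have : xVec (Function.update y i c) j s = xVec y j s := by
      unfold xVec; rw [Function.update_of_ne hj]
    rw [this, sub_self, mul_zero]
  · intro hmem; exact absurd (Finset.mem_univ i) hmem

omit [NeZero q] in
lemma gam_xVec_update_abs (y : Fin n → Fin q) (i : Fin n) (c : Fin q) (k : Fin n) (r : Fin q) :
    |gam A J (xVec (Function.update y i c)) k r - gam A J (xVec y) k r| ≤ Js J * |A k i| := by
  rw [gam_xVec_update_sub]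
  refine (Finset.abs_sum_le_sum_abs _ _).trans ?_
  calc ∑ s, |J r s * (A k i * (xVec (Function.update y i c) i s - xVec y i s))|
      ≤ ∑ s, |J r s| * |A k i| := by
        refine Finset.sum_le_sum fun s _ => ?_
        rw [abs_mul, abs_mul]
        refine mul_le_mul_of_nonneg_left ?_ (abs_nonneg _)
        have h1 : |xVec (Function.update y i c) i s - xVec y i s| ≤ 1 := by
          rw [abs_sub_le_iff]
          constructor
          · have := xVec_le_one (Function.update y i c) i s
            have := xVec_nonneg y i s
            linarith
          · have := xVec_le_one y i s
            have := xVec_nonneg (Function.update y i c) i s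
            linarith
        calc |A k i| * |xVec (Function.update y i c) i s - xVec y i s|
            ≤ |A k i| * 1 := mul_le_mul_of_nonneg_left h1 (abs_nonneg _)
          _ = |A k i| := mul_one _
    _ = (∑ s, |J r s|) * |A k i| := by rw [Finset.sum_mul]
    _ ≤ Js J * |A k i| := mul_le_mul_of_nonneg_right (Js_row J r) (abs_nonneg _)

omit [NeZero q] in
lemma gam_xVec_update_self (hdiag : ∀ i, A i i = 0) (y : Fin n → Fin q) (i : Fin n) (c : Fin q)
    (r : Fin q) : gam A J (xVec (Function.update y i c)) i r = gam A J (xVec y) i r := by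
  have := gam_xVec_update_sub A J y i c i r
  rw [hdiag i] at this
  simp only [zero_mul, mul_zero, Finset.sum_const_zero] at this
  linarith

lemma xHat_update_self (hdiag : ∀ i, A i i = 0) (y : Fin n → Fin q) (i : Fin n) (c : Fin q)
    (r : Fin q) : xHat A J h (Function.update y i c) i r = xHat A J h y i r := by
  unfold xHat
  congr 1
  · rw [gam_xVec_update_self A J hdiag]
  · refine Finset.sum_congr rfl fun s _ => ?_
    rw [gam_xVec_update_self A J hdiag]

/-- softmax Lipschitz-type bound. -/
lemma softmax_diff (a b : Fin q → ℝ) (δ : ℝ) (hδ1 : δ ≤ 1) (hab : ∀ s, |a s - b s| ≤ δ)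
    (r : Fin q) :
    |Real.exp (a r) / ∑ s, Real.exp (a s) - Real.exp (b r) / ∑ s, Real.exp (b s)|
      ≤ (Real.exp 2 - 1) * δ := by
  have hδ0 : 0 ≤ δ := (abs_nonneg _).trans (hab r)
  have Sa_pos : (0:ℝ) < ∑ s, Real.exp (a s) :=
    Finset.sum_pos (fun s _ => Real.exp_pos _) Finset.univ_nonempty
  have Sb_pos : (0:ℝ) < ∑ s, Real.exp (b s) :=
    Finset.sum_pos (fun s _ => Real.exp_pos _) Finset.univ_nonempty
  -- key : p a r ≤ exp (2δ) * p b r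
  have key : ∀ a b : Fin q → ℝ, (∀ s, |a s - b s| ≤ δ) →
      Real.exp (a r) / ∑ s, Real.exp (a s)
        ≤ Real.exp (2*δ) * (Real.exp (b r) / ∑ s, Real.exp (b s)) := by
    intro a b hab
    have Sa_pos : (0:ℝ) < ∑ s, Real.exp (a s) :=
      Finset.sum_pos (fun s _ => Real.exp_pos _) Finset.univ_nonempty
    have Sb_pos : (0:ℝ) < ∑ s, Real.exp (b s) :=
      Finset.sum_pos (fun s _ => Real.exp_pos _) Finset.univ_nonempty
    have h1 : Real.exp (a r) ≤ Real.exp δ * Real.exp (b r) := by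
      rw [← Real.exp_add]
      apply Real.exp_le_exp.2
      have := (abs_le.1 (hab r)).2
      linarith
    have h2 : Real.exp (-δ) * ∑ s, Real.exp (b s) ≤ ∑ s, Real.exp (a s) := by
      rw [Finset.mul_sum]
      refine Finset.sum_le_sum fun s _ => ?_
      rw [← Real.exp_add]
      apply Real.exp_le_exp.2
      have := (abs_le.1 (hab s)).1
      linarith
    rw [mul_div_assoc'] at *
    rw [div_le_div_iff₀ Sa_pos Sb_pos]
    have hexp : Real.exp (2*δ) * Real.exp (-δ) = Real.exp δ := by
      rw [← Real.exp_add]; ring_nf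
    calc Real.exp (a r) * ∑ s, Real.exp (b s)
        ≤ (Real.exp δ * Real.exp (b r)) * ∑ s, Real.exp (b s) :=
          mul_le_mul_of_nonneg_right h1 Sb_pos.le
      _ = (Real.exp (2*δ) * Real.exp (b r)) * (Real.exp (-δ) * ∑ s, Real.exp (b s)) := by
          rw [← hexp]; ring
      _ ≤ (Real.exp (2*δ) * Real.exp (b r)) * ∑ s, Real.exp (a s) := by
          refine mul_le_mul_of_nonneg_left h2 ?_
          positivity
  have pb_le_one : ∀ c : Fin q → ℝ, Real.exp (c r) / ∑ s, Real.exp (c s) ≤ 1 := by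
    intro c
    have Sc_pos : (0:ℝ) < ∑ s, Real.exp (c s) :=
      Finset.sum_pos (fun s _ => Real.exp_pos _) Finset.univ_nonempty
    exact div_le_one_of_le₀
      (Finset.single_le_sum (f := fun s => Real.exp (c s))
        (fun s _ => (Real.exp_pos _).le) (Finset.mem_univ r)) Sc_pos.le
  have pb_nonneg : ∀ c : Fin q → ℝ, 0 ≤ Real.exp (c r) / ∑ s, Real.exp (c s) := by
    intro c
    have Sc_pos : (0:ℝ) < ∑ s, Real.exp (c s) :=
      Finset.sum_pos (fun s _ => Real.exp_pos _) Finset.univ_nonempty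
    positivity
  have hconv : Real.exp (2*δ) - 1 ≤ (Real.exp 2 - 1) * δ := by
    have := convexOn_exp.2 (Set.mem_univ (0:ℝ)) (Set.mem_univ (2:ℝ))
      (by linarith : (0:ℝ) ≤ 1 - δ) hδ0 (by ring)
    simp only [smul_eq_mul, mul_zero, zero_add, Real.exp_zero] at this
    have h2d : (2:ℝ)*δ = δ*2 := by ring
    rw [h2d]
    nlinarith
  have he1 : (1:ℝ) ≤ Real.exp (2*δ) := by
    rw [← Real.exp_zero]
    apply Real.exp_le_exp.2; linarith
  have k1 := key a b hab
  have k2 := key b a (fun s => by rw [abs_sub_comm]; exact hab s)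
  set pa := Real.exp (a r) / ∑ s, Real.exp (a s) with hpa
  set pb := Real.exp (b r) / ∑ s, Real.exp (b s) with hpb
  rw [abs_le]
  constructor
  · have : pb ≤ Real.exp (2*δ) * pa := k2
    have h4 : pb - pa ≤ (Real.exp (2*δ) - 1) * pa := by nlinarith [pb_nonneg a]
    have h5 : (Real.exp (2*δ) - 1) * pa ≤ (Real.exp (2*δ) - 1) * 1 :=
      mul_le_mul_of_nonneg_left (pb_le_one a) (by linarith)
    nlinarith
  · have h4 : pa - pb ≤ (Real.exp (2*δ) - 1) * pb := by nlinarith [pb_nonneg b]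
    have h5 : (Real.exp (2*δ) - 1) * pb ≤ (Real.exp (2*δ) - 1) * 1 :=
      mul_le_mul_of_nonneg_left (pb_le_one b) (by linarith)
    nlinarith

end Diffs
end PottsProof
namespace PottsProof
open Function

variable {n q : ℕ} [NeZero q]

section Osc
variable (A : Matrix (Fin n) (Fin n) ℝ) (J : Matrix (Fin q) (Fin q) ℝ) (h : Fin q → ℝ)

noncomputable def Lc : ℝ := (Real.exp 2 - 1) * Js J

omit [NeZero q] in
lemma Lc_nonneg : 0 ≤ Lc J := by
  have h1 : (1:ℝ) ≤ Real.exp 2 := by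
    rw [← Real.exp_zero]; exact Real.exp_le_exp.2 (by norm_num)
  have := Js_pos J
  unfold Lc; nlinarith

lemma xHat_update_diff (hdiag : ∀ i, A i i = 0) (hside : Js J * alp A ≤ 1)
    (y : Fin n → Fin q) (i : Fin n) (c : Fin q) (j : Fin n) (r : Fin q) :
    |xHat A J h (Function.update y i c) j r - xHat A J h y j r| ≤ Lc J * |A j i| := by
  by_cases hji : j = i
  · subst hji
    rw [xHat_update_self A J h hdiag, sub_self, abs_zero]
    exact mul_nonneg (Lc_nonneg J) (abs_nonneg _)
  · have key := softmax_diff (fun s => gam A J (xVec (Function.update y i c)) j s + h s)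
      (fun s => gam A J (xVec y) j s + h s) (Js J * |A j i|)
      (by
        calc Js J * |A j i| ≤ Js J * alp A :=
              mul_le_mul_of_nonneg_left (abs_le_alp A j i) (Js_pos J).le
          _ ≤ 1 := hside)
      (fun s => by
        have : gam A J (xVec (Function.update y i c)) j s + h s -
            (gam A J (xVec y) j s + h s) =
            gam A J (xVec (Function.update y i c)) j s - gam A J (xVec y) j s := by ring
        rw [this]
        exact gam_xVec_update_abs A J y i c j s) r
    unfold xHat
    calc |Real.exp (gam A J (xVec (Function.update y i c)) j r + h r) /
          (∑ s, Real.exp (gam A J (xVec (Function.update y i c)) j s + h s)) -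
          Real.exp (gam A J (xVec y) j r + h r) /
          (∑ s, Real.exp (gam A J (xVec y) j s + h s))|
        ≤ (Real.exp 2 - 1) * (Js J * |A j i|) := key
      _ = Lc J * |A j i| := by rw [Lc]; ring

lemma gam_xHat_update_abs (hdiag : ∀ i, A i i = 0) (hside : Js J * alp A ≤ 1)
    (y : Fin n → Fin q) (i : Fin n) (c : Fin q) (k : Fin n) (r : Fin q) :
    |gam A J (xHat A J h (Function.update y i c)) k r - gam A J (xHat A J h y) k r|
      ≤ Js J * (Lc J * Pm A k i) := by
  rw [gam_sub]
  refine (Finset.abs_sum_le_sum_abs _ _).trans ?_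
  have inner : ∀ s : Fin q,
      |∑ j, A k j * (xHat A J h (Function.update y i c) j s - xHat A J h y j s)|
        ≤ Lc J * Pm A k i := by
    intro s
    refine (Finset.abs_sum_le_sum_abs _ _).trans ?_
    calc ∑ j, |A k j * (xHat A J h (Function.update y i c) j s - xHat A J h y j s)|
        ≤ ∑ j, |A k j| * (Lc J * |A j i|) := by
          refine Finset.sum_le_sum fun j _ => ?_
          rw [abs_mul]
          exact mul_le_mul_of_nonneg_left (xHat_update_diff A J h hdiag hside y i c j s)
            (abs_nonneg _)
      _ = Lc J * Pm A k i := by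
          rw [Pm, Finset.mul_sum]
          refine Finset.sum_congr rfl fun j _ => by ring
  calc ∑ s, |J r s * ∑ j, A k j * (xHat A J h (Function.update y i c) j s - xHat A J h y j s)|
      ≤ ∑ s, |J r s| * (Lc J * Pm A k i) := by
        refine Finset.sum_le_sum fun s _ => ?_
        rw [abs_mul]
        exact mul_le_mul_of_nonneg_left (inner s) (abs_nonneg _)
    _ = (∑ s, |J r s|) * (Lc J * Pm A k i) := by rw [Finset.sum_mul]
    _ ≤ Js J * (Lc J * Pm A k i) := by
        exact mul_le_mul_of_nonneg_right (Js_row J r)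
          (mul_nonneg (Lc_nonneg J) (Pm_nonneg A k i))

lemma Gg_update_abs (hdiag : ∀ i, A i i = 0) (hside : Js J * alp A ≤ 1)
    (y : Fin n → Fin q) (i : Fin n) (c : Fin q) (k : Fin n) (r : Fin q) :
    |Gg A J h (Function.update y i c) k r - Gg A J h y k r|
      ≤ Js J * |A k i| + Js J * (Lc J * Pm A k i) := by
  have hsplit : Gg A J h (Function.update y i c) k r - Gg A J h y k r =
      (gam A J (xVec (Function.update y i c)) k r - gam A J (xVec y) k r) +
      (gam A J (xHat A J h (Function.update y i c)) k r - gam A J (xHat A J h y) k r) := by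
    unfold Gg; ring
  rw [hsplit]
  exact (abs_add_le _ _).trans (add_le_add (gam_xVec_update_abs A J y i c k r)
    (gam_xHat_update_abs A J h hdiag hside y i c k r))

lemma Gg_update_abs_self (hA : A.IsSymm) (hdiag : ∀ i, A i i = 0) (hside : Js J * alp A ≤ 1)
    (y : Fin n → Fin q) (i : Fin n) (c : Fin q) (r : Fin q) :
    |Gg A J h (Function.update y i c) i r - Gg A J h y i r| ≤ Js J * (Lc J * rho A i) := by
  have hsplit : Gg A J h (Function.update y i c) i r - Gg A J h y i r =
      (gam A J (xHat A J h (Function.update y i c)) i r - gam A J (xHat A J h y) i r) := by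
    unfold Gg
    rw [gam_xVec_update_self A J hdiag]
    ring
  rw [hsplit, ← Pm_self A hA i]
  exact gam_xHat_update_abs A J h hdiag hside y i c i r

lemma Dd_update_abs (hdiag : ∀ i, A i i = 0) (hside : Js J * alp A ≤ 1)
    (y : Fin n → Fin q) (i : Fin n) (c : Fin q) (k : Fin n) (hki : k ≠ i) (r : Fin q) :
    |Dd A J h (Function.update y i c) k r - Dd A J h y k r| ≤ Lc J * |A k i| := by
  have hx : xVec (Function.update y i c) k r = xVec y k r := by
    unfold xVec; rw [Function.update_of_ne hki]
  have hsplit : Dd A J h (Function.update y i c) k r - Dd A J h y k r =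
      -(xHat A J h (Function.update y i c) k r - xHat A J h y k r) := by
    unfold Dd; rw [hx]; ring
  rw [hsplit, abs_neg]
  exact xHat_update_diff A J h hdiag hside y i c k r

lemma mm_update_abs (hdiag : ∀ i, A i i = 0) (hside : Js J * alp A ≤ 1)
    (y : Fin n → Fin q) (i : Fin n) (c : Fin q) (k : Fin n) :
    |mm A J h (Function.update y i c) k - mm A J h y k|
      ≤ q * (Js J * |A k i| + Js J * (Lc J * Pm A k i)) := by
  unfold mm
  rw [← Finset.sum_sub_distrib]
  refine (Finset.abs_sum_le_sum_abs _ _).trans ?_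
  calc ∑ r, |(|gam A J (xVec (Function.update y i c)) k r| +
        |gam A J (xHat A J h (Function.update y i c)) k r|) -
        (|gam A J (xVec y) k r| + |gam A J (xHat A J h y) k r|)|
      ≤ ∑ r : Fin q, (Js J * |A k i| + Js J * (Lc J * Pm A k i)) := by
        refine Finset.sum_le_sum fun r _ => ?_
        have h1 := abs_sub_abs_le_abs_sub (gam A J (xVec (Function.update y i c)) k r)
          (gam A J (xVec y) k r)
        have h1' := abs_sub_abs_le_abs_sub (gam A J (xVec y) k r)
          (gam A J (xVec (Function.update y i c)) k r)
        have h2 := abs_sub_abs_le_abs_sub (gam A J (xHat A J h (Function.update y i c)) k r)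
          (gam A J (xHat A J h y) k r)
        have h2' := abs_sub_abs_le_abs_sub (gam A J (xHat A J h y) k r)
          (gam A J (xHat A J h (Function.update y i c)) k r)
        have b1 := gam_xVec_update_abs A J y i c k r
        have b2 := gam_xHat_update_abs A J h hdiag hside y i c k r
        rw [abs_sub_comm] at h1' h2'
        rw [abs_le]
        constructor <;> linarith
      _ = q * (Js J * |A k i| + Js J * (Lc J * Pm A k i)) := by
        rw [Finset.sum_const, Finset.card_univ, Fintype.card_fin, nsmul_eq_mul]

end Osc
end PottsProof
namespace PottsProof
open Function

variable {n q : ℕ} [NeZero q]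

section Cond
variable (A : Matrix (Fin n) (Fin n) ℝ) (J : Matrix (Fin q) (Fin q) ℝ) (h : Fin q → ℝ)

lemma uu_update_abs (hdiag : ∀ i, A i i = 0) (hside : Js J * alp A ≤ 1)
    (y : Fin n → Fin q) (i : Fin n) (c : Fin q) (k : Fin n) (hki : k ≠ i) :
    |uu A J h (Function.update y i c) k - uu A J h y k|
      ≤ Lc J * |A k i| * mm A J h (Function.update y i c) k
        + q * (Js J * |A k i| + Js J * (Lc J * Pm A k i)) := by
  unfold uu
  rw [← Finset.sum_sub_distrib]
  refine (Finset.abs_sum_le_sum_abs _ _).trans ?_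
  have hterm : ∀ r : Fin q,
      |Dd A J h (Function.update y i c) k r * Gg A J h (Function.update y i c) k r -
        Dd A J h y k r * Gg A J h y k r|
      ≤ Lc J * |A k i| * (|gam A J (xVec (Function.update y i c)) k r| +
          |gam A J (xHat A J h (Function.update y i c)) k r|)
        + (Js J * |A k i| + Js J * (Lc J * Pm A k i)) := by
    intro r
    have hsplit : Dd A J h (Function.update y i c) k r * Gg A J h (Function.update y i c) k r -
        Dd A J h y k r * Gg A J h y k r
        = (Dd A J h (Function.update y i c) k r - Dd A J h y k r) *
            Gg A J h (Function.update y i c) k r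
          + Dd A J h y k r * (Gg A J h (Function.update y i c) k r - Gg A J h y k r) := by ring
    rw [hsplit]
    refine (abs_add_le _ _).trans (add_le_add ?_ ?_)
    · rw [abs_mul]
      calc |Dd A J h (Function.update y i c) k r - Dd A J h y k r| *
            |Gg A J h (Function.update y i c) k r|
          ≤ (Lc J * |A k i|) * |Gg A J h (Function.update y i c) k r| :=
            mul_le_mul_of_nonneg_right (Dd_update_abs A J h hdiag hside y i c k hki r)
              (abs_nonneg _)
        _ ≤ (Lc J * |A k i|) * (|gam A J (xVec (Function.update y i c)) k r| +
              |gam A J (xHat A J h (Function.update y i c)) k r|) :=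
            mul_le_mul_of_nonneg_left (Gg_abs_le A J h _ k r)
              (mul_nonneg (Lc_nonneg J) (abs_nonneg _))
    · rw [abs_mul]
      calc |Dd A J h y k r| * |Gg A J h (Function.update y i c) k r - Gg A J h y k r|
          ≤ 1 * |Gg A J h (Function.update y i c) k r - Gg A J h y k r| :=
            mul_le_mul_of_nonneg_right (Dd_abs_le_one A J h y k r) (abs_nonneg _)
        _ = |Gg A J h (Function.update y i c) k r - Gg A J h y k r| := one_mul _
        _ ≤ Js J * |A k i| + Js J * (Lc J * Pm A k i) :=
            Gg_update_abs A J h hdiag hside y i c k r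
  calc ∑ r, |Dd A J h (Function.update y i c) k r * Gg A J h (Function.update y i c) k r -
        Dd A J h y k r * Gg A J h y k r|
      ≤ ∑ r, (Lc J * |A k i| * (|gam A J (xVec (Function.update y i c)) k r| +
          |gam A J (xHat A J h (Function.update y i c)) k r|)
        + (Js J * |A k i| + Js J * (Lc J * Pm A k i))) :=
        Finset.sum_le_sum fun r _ => hterm r
    _ = Lc J * |A k i| * mm A J h (Function.update y i c) k
        + q * (Js J * |A k i| + Js J * (Lc J * Pm A k i)) := by
        rw [Finset.sum_add_distrib, ← Finset.mul_sum, Finset.sum_const, Finset.card_univ,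
          Fintype.card_fin, nsmul_eq_mul]
        rfl

/-- double-counting over one coordinate -/
lemma sum_update (F : (Fin n → Fin q) → ℝ) (i : Fin n) :
    ∑ y : Fin n → Fin q, ∑ t : Fin q, F (Function.update y i t)
      = q * ∑ y : Fin n → Fin q, F y := by
  rw [← Finset.sum_product']
  have step : ∑ p ∈ (Finset.univ ×ˢ Finset.univ : Finset ((Fin n → Fin q) × Fin q)),
      F (Function.update p.1 i p.2)
      = ∑ p ∈ (Finset.univ ×ˢ Finset.univ : Finset ((Fin n → Fin q) × Fin q)), F p.1 := by
    refine Finset.sum_nbij' (fun p => (Function.update p.1 i p.2, p.1 i))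
      (fun p => (Function.update p.1 i p.2, p.1 i)) ?_ ?_ ?_ ?_ ?_
    · intro p _; exact Finset.mem_univ _
    · intro p _; exact Finset.mem_univ _
    · intro p _
      ext
      · simp [Function.update_idem, Function.update_eq_self]
      · simp
    · intro p _
      ext
      · simp [Function.update_idem, Function.update_eq_self]
      · simp
    · intro p _; rfl
  rw [step, Finset.sum_product, Finset.mul_sum]
  refine Finset.sum_congr rfl fun y _ => ?_
  have hc : ∑ _t : Fin q, F y = (q:ℝ) * F y := by
    rw [Finset.sum_const, Finset.card_univ, Fintype.card_fin, nsmul_eq_mul]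
  simpa using hc

noncomputable def Bconst (y : Fin n → Fin q) (i : Fin n) : ℝ :=
  (1/2) * ∑ j ∈ Finset.univ.erase i, ∑ k ∈ Finset.univ.erase i, A j k * J (y j) (y k)
    + ∑ j ∈ Finset.univ.erase i, h (y j)

omit [NeZero q] in
lemma gam_eq (y : Fin n → Fin q) (i : Fin n) (t : Fin q) :
    gam A J (xVec y) i t = ∑ k, A i k * J t (y k) := by
  unfold gam xVec
  have h1 : ∀ s, J t s * ∑ j, A i j * (if y j = s then (1:ℝ) else 0)
      = ∑ j, (if y j = s then J t s * A i j else 0) := by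
    intro s
    rw [Finset.mul_sum]
    refine Finset.sum_congr rfl fun j _ => ?_
    by_cases hy : y j = s <;> simp [hy]
  rw [Finset.sum_congr rfl fun s _ => h1 s, Finset.sum_comm]
  refine Finset.sum_congr rfl fun j _ => ?_
  rw [Finset.sum_ite_eq]
  simp [mul_comm]

lemma pottsH_update (hA : A.IsSymm) (hJ : J.IsSymm) (hdiag : ∀ i, A i i = 0)
    (y : Fin n → Fin q) (i : Fin n) (t : Fin q) :
    pottsH A J h (Function.update y i t)
      = Bconst A J h y i + gam A J (xVec y) i t + h t := by
  set z := Function.update y i t with hz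
  have hzi : z i = t := Function.update_self i t y
  have hzj : ∀ j, j ≠ i → z j = y j := fun j hj => Function.update_of_ne hj t y
  unfold pottsH Bconst
  -- linear part
  have hlin : ∑ j, h (z j) = h t + ∑ j ∈ Finset.univ.erase i, h (y j) := by
    rw [← Finset.add_sum_erase _ _ (Finset.mem_univ i), hzi]
    congr 1
    refine Finset.sum_congr rfl fun j hj => ?_
    rw [hzj j (Finset.ne_of_mem_erase hj)]
  -- quadratic part
  have hquad : ∑ j, ∑ k, A j k * J (z j) (z k)
      = 2 * gam A J (xVec y) i t
        + ∑ j ∈ Finset.univ.erase i, ∑ k ∈ Finset.univ.erase i, A j k * J (y j) (y k) := by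
    rw [← Finset.add_sum_erase _ _ (Finset.mem_univ i)]
    have hFi : ∑ k, A i k * J (z i) (z k) = gam A J (xVec y) i t := by
      rw [gam_eq, hzi]
      rw [← Finset.add_sum_erase _ (fun k => A i k * J t (z k)) (Finset.mem_univ i),
        ← Finset.add_sum_erase _ (fun k => A i k * J t (y k)) (Finset.mem_univ i)]
      rw [hdiag i, zero_mul, zero_mul]
      congr 1
      refine Finset.sum_congr rfl fun k hk => ?_
      rw [hzj k (Finset.ne_of_mem_erase hk)]
    have hFj : ∀ j ∈ Finset.univ.erase i, ∑ k, A j k * J (z j) (z k)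
        = A i j * J t (y j) + ∑ k ∈ Finset.univ.erase i, A j k * J (y j) (y k) := by
      intro j hj
      have hji : j ≠ i := Finset.ne_of_mem_erase hj
      rw [← Finset.add_sum_erase _ (fun k => A j k * J (z j) (z k)) (Finset.mem_univ i)]
      rw [hzj j hji, hzi]
      congr 1
      · rw [hA.apply i j, hJ.apply t (y j)]
      · refine Finset.sum_congr rfl fun k hk => ?_
        rw [hzj k (Finset.ne_of_mem_erase hk)]
    rw [Finset.sum_congr rfl hFj, Finset.sum_add_distrib, hFi]
    have hsum2 : ∑ j ∈ Finset.univ.erase i, A i j * J t (y j) = gam A J (xVec y) i t := by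
      rw [gam_eq]
      rw [← Finset.add_sum_erase _ (fun k => A i k * J t (y k)) (Finset.mem_univ i)]
      rw [hdiag i, zero_mul, zero_add]
    rw [hsum2]
    ring
  rw [hlin, hquad]
  ring

end Cond
end PottsProof
namespace PottsProof
open Function

variable {n q : ℕ} [NeZero q]

section CondZero
variable (A : Matrix (Fin n) (Fin n) ℝ) (J : Matrix (Fin q) (Fin q) ℝ) (h : Fin q → ℝ)

lemma cond_zero (hA : A.IsSymm) (hJ : J.IsSymm) (hdiag : ∀ i, A i i = 0)
    (i : Fin n) (r : Fin q) (g : (Fin n → Fin q) → ℝ)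
    (hg : ∀ y t, g (Function.update y i t) = g y) :
    ∑ y : Fin n → Fin q, pottsWeight A J h y * (Dd A J h y i r * g y) = 0 := by
  have hq0 : (q:ℝ) ≠ 0 := Nat.cast_ne_zero.2 (NeZero.ne q)
  have hZ : (0:ℝ) < ∑ y' : Fin n → Fin q, Real.exp (pottsH A J h y') := Zpos A J h
  have fib : ∀ y : Fin n → Fin q,
      ∑ t, pottsWeight A J h (Function.update y i t) *
        (Dd A J h (Function.update y i t) i r * g (Function.update y i t)) = 0 := by
    intro y
    have hS : (0:ℝ) < ∑ s, Real.exp (gam A J (xVec y) i s + h s) :=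
      Finset.sum_pos (fun s _ => Real.exp_pos _) Finset.univ_nonempty
    have hterm : ∀ t, pottsWeight A J h (Function.update y i t) *
        (Dd A J h (Function.update y i t) i r * g (Function.update y i t))
        = (Real.exp (Bconst A J h y i) * g y /
            ∑ y' : Fin n → Fin q, Real.exp (pottsH A J h y')) *
          (Real.exp (gam A J (xVec y) i t + h t) *
            ((if t = r then (1:ℝ) else 0) - xHat A J h y i r)) := by
      intro t
      have e1 : pottsWeight A J h (Function.update y i t)
          = Real.exp (Bconst A J h y i + gam A J (xVec y) i t + h t) /
              ∑ y' : Fin n → Fin q, Real.exp (pottsH A J h y') := by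
        unfold pottsWeight
        rw [pottsH_update A J h hA hJ hdiag]
      have e2 : Dd A J h (Function.update y i t) i r
          = (if t = r then (1:ℝ) else 0) - xHat A J h y i r := by
        unfold Dd
        rw [xHat_update_self A J h hdiag]
        congr 1
        unfold xVec
        rw [Function.update_self]
      rw [e1, e2, hg]
      rw [show Bconst A J h y i + gam A J (xVec y) i t + h t
          = Bconst A J h y i + (gam A J (xVec y) i t + h t) by ring, Real.exp_add]
      ring
    rw [Finset.sum_congr rfl fun t _ => hterm t, ← Finset.mul_sum]
    have e3 : ∑ t, Real.exp (gam A J (xVec y) i t + h t) * (if t = r then (1:ℝ) else 0)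
        = Real.exp (gam A J (xVec y) i r + h r) := by
      rw [Finset.sum_eq_single r]
      · rw [if_pos rfl, mul_one]
      · intro t _ ht
        rw [if_neg ht, mul_zero]
      · intro hmem
        exact absurd (Finset.mem_univ r) hmem
    have hzero : ∑ t, Real.exp (gam A J (xVec y) i t + h t) *
        ((if t = r then (1:ℝ) else 0) - xHat A J h y i r) = 0 := by
      simp only [mul_sub]
      rw [Finset.sum_sub_distrib, e3, ← Finset.sum_mul]
      unfold xHat
      rw [mul_comm, div_mul_cancel₀ _ hS.ne', sub_self]
    rw [hzero, mul_zero]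
  have h1 := sum_update (fun y => pottsWeight A J h y * (Dd A J h y i r * g y)) i
  rw [Finset.sum_congr rfl fun y _ => fib y, Finset.sum_const_zero] at h1
  exact ((mul_eq_zero.1 h1.symm).resolve_left hq0)

end CondZero
end PottsProof
namespace PottsProof
open Function

variable {n q : ℕ} [NeZero q]

section Identity
variable (A : Matrix (Fin n) (Fin n) ℝ) (J : Matrix (Fin q) (Fin q) ℝ) (h : Fin q → ℝ)

noncomputable def Qd (z z' : Fin n → Fin q → ℝ) : ℝ :=
  ∑ i, ∑ j, ∑ r, ∑ s, A i j * (J r s * (z i r * z' j s))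

omit [NeZero q] in
lemma Fquad_eq_Qd (z : Fin n → Fin q → ℝ) : Fquad A J z = (1/2) * Qd A J z z := by
  unfold Fquad Qd
  congr 1
  refine Finset.sum_congr rfl fun i _ => Finset.sum_congr rfl fun j _ => ?_
  rw [Finset.mul_sum]
  refine Finset.sum_congr rfl fun r _ => ?_
  rw [Finset.mul_sum]
  refine Finset.sum_congr rfl fun s _ => ?_
  ring

omit [NeZero q] in
lemma Qd_swap (hA : A.IsSymm) (hJ : J.IsSymm) (z z' : Fin n → Fin q → ℝ) :
    Qd A J z z' = Qd A J z' z := by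
  unfold Qd
  rw [Finset.sum_comm]
  refine Finset.sum_congr rfl fun i _ => Finset.sum_congr rfl fun j _ => ?_
  rw [Finset.sum_comm]
  refine Finset.sum_congr rfl fun r _ => Finset.sum_congr rfl fun s _ => ?_
  rw [hA.apply i j, hJ.apply r s]
  ring

lemma sum_uu_eq_Qd (y : Fin n → Fin q) :
    ∑ i, uu A J h y i
      = Qd A J (fun i r => Dd A J h y i r)
          (fun j s => xVec y j s + xHat A J h y j s) := by
  unfold uu Qd Gg gam
  refine Finset.sum_congr rfl fun i _ => ?_
  have step1 : ∀ r : Fin q, Dd A J h y i r *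
      ((∑ s, J r s * ∑ j, A i j * xVec y j s) + ∑ s, J r s * ∑ j, A i j * xHat A J h y j s)
      = ∑ s, ∑ j, Dd A J h y i r * (J r s * (A i j * (xVec y j s + xHat A J h y j s))) := by
    intro r
    rw [← Finset.sum_add_distrib, Finset.mul_sum]
    refine Finset.sum_congr rfl fun s _ => ?_
    rw [← mul_add, ← Finset.sum_add_distrib, Finset.mul_sum, Finset.mul_sum]
    refine Finset.sum_congr rfl fun j _ => ?_
    ring
  rw [Finset.sum_congr rfl fun r _ => step1 r]
  have c1 : ∀ r : Fin q, ∑ s, ∑ j, Dd A J h y i r * (J r s * (A i j * (xVec y j s + xHat A J h y j s)))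
      = ∑ j, ∑ s, Dd A J h y i r * (J r s * (A i j * (xVec y j s + xHat A J h y j s))) :=
    fun r => Finset.sum_comm
  rw [Finset.sum_congr rfl fun r _ => c1 r]
  rw [Finset.sum_comm (f := fun (r : Fin q) (j : Fin n) =>
    ∑ s, Dd A J h y i r * (J r s * (A i j * (xVec y j s + xHat A J h y j s))))]
  refine Finset.sum_congr rfl fun j _ => Finset.sum_congr rfl fun r _ =>
    Finset.sum_congr rfl fun s _ => ?_
  ring

lemma Fquad_diff (hA : A.IsSymm) (hJ : J.IsSymm) (y : Fin n → Fin q) :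
    Fquad A J (xVec y) - Fquad A J (xHat A J h y) = (1/2) * ∑ i, uu A J h y i := by
  have e1 := Fquad_eq_Qd A J (xVec y)
  have e2 := Fquad_eq_Qd A J (xHat A J h y)
  have e3 := sum_uu_eq_Qd A J h y
  have e4 : Qd A J (fun i r => Dd A J h y i r)
      (fun j s => xVec y j s + xHat A J h y j s)
      = Qd A J (xVec y) (xVec y) + Qd A J (xVec y) (xHat A J h y)
        - Qd A J (xHat A J h y) (xVec y) - Qd A J (xHat A J h y) (xHat A J h y) := by
    unfold Qd
    simp only [← Finset.sum_add_distrib, ← Finset.sum_sub_distrib]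
    refine Finset.sum_congr rfl fun i _ => Finset.sum_congr rfl fun j _ =>
      Finset.sum_congr rfl fun r _ => Finset.sum_congr rfl fun s _ => ?_
    unfold Dd
    ring
  have e5 := Qd_swap A J hA hJ (xHat A J h y) (xVec y)
  rw [e1, e2, e3, e4, e5]
  ring

end Identity
end PottsProof
namespace PottsProof
open Function

variable {n q : ℕ} [NeZero q]

section Bounds
variable (A : Matrix (Fin n) (Fin n) ℝ) (J : Matrix (Fin q) (Fin q) ℝ) (h : Fin q → ℝ)

omit [NeZero q] in
lemma gam_abs_le (z : Fin n → Fin q → ℝ) (hz : ∀ j s, 0 ≤ z j s ∧ z j s ≤ 1)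
    (i : Fin n) (r : Fin q) :
    |gam A J z i r| ≤ ∑ s, |J r s| * |∑ j, A i j * z j s| := by
  unfold gam
  refine (Finset.abs_sum_le_sum_abs _ _).trans (le_of_eq ?_)
  exact Finset.sum_congr rfl fun s _ => abs_mul _ _

omit [NeZero q] in
lemma inner_col_le_sup (z : Fin n → Fin q → ℝ) (hz : ∀ j s, 0 ≤ z j s ∧ z j s ≤ 1)
    (i : Fin n) (s : Fin q) : |∑ j, A i j * z j s| ≤ n * alp A := by
  refine (Finset.abs_sum_le_sum_abs _ _).trans ?_
  calc ∑ j, |A i j * z j s| ≤ ∑ j : Fin n, alp A := by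
        refine Finset.sum_le_sum fun j _ => ?_
        rw [abs_mul]
        calc |A i j| * |z j s| ≤ |A i j| * 1 := by
              refine mul_le_mul_of_nonneg_left ?_ (abs_nonneg _)
              rw [abs_le]
              exact ⟨by linarith [(hz j s).1], (hz j s).2⟩
          _ = |A i j| := mul_one _
          _ ≤ alp A := abs_le_alp A i j
    _ = n * alp A := by
        rw [Finset.sum_const, Finset.card_univ, Fintype.card_fin, nsmul_eq_mul]

lemma mm_le_sup (y : Fin n → Fin q) (i : Fin n) :
    mm A J h y i ≤ 2 * Js J * (n * alp A) := by
  have hx : ∀ j s, 0 ≤ xVec y j s ∧ xVec y j s ≤ 1 :=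
    fun j s => ⟨xVec_nonneg y j s, xVec_le_one y j s⟩
  have hw : ∀ j s, 0 ≤ xHat A J h y j s ∧ xHat A J h y j s ≤ 1 :=
    fun j s => ⟨xHat_nonneg A J h y j s, xHat_le_one A J h y j s⟩
  have hna : 0 ≤ (n:ℝ) * alp A := mul_nonneg (Nat.cast_nonneg n) (alp_nonneg A)
  have key : ∀ (z : Fin n → Fin q → ℝ), (∀ j s, 0 ≤ z j s ∧ z j s ≤ 1) →
      ∑ r, |gam A J z i r| ≤ Js J * (n * alp A) := by
    intro z hz
    calc ∑ r, |gam A J z i r| ≤ ∑ r, ∑ s, |J r s| * |∑ j, A i j * z j s| :=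
          Finset.sum_le_sum fun r _ => gam_abs_le A J z hz i r
      _ ≤ ∑ r, ∑ s, |J r s| * (n * alp A) := by
          refine Finset.sum_le_sum fun r _ => Finset.sum_le_sum fun s _ =>
            mul_le_mul_of_nonneg_left (inner_col_le_sup A z hz i s) (abs_nonneg _)
      _ = (∑ r, ∑ s, |J r s|) * (n * alp A) := by
          rw [Finset.sum_mul]
          exact Finset.sum_congr rfl fun r _ => (Finset.sum_mul _ _ _).symm
      _ ≤ Js J * (n * alp A) := by
          refine mul_le_mul_of_nonneg_right ?_ hna
          unfold Js; linarith
  unfold mm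
  rw [Finset.sum_add_distrib]
  have h1 := key (xVec y) hx
  have h2 := key (xHat A J h y) hw
  linarith

lemma sum_mm_le (C₀ : ℝ)
    (hC : ∀ x : Fin n → ℝ, (∀ j, x j ∈ Set.Icc (0:ℝ) 1) → ∑ i, |∑ j, A i j * x j| ≤ C₀ * n)
    (hC0 : 0 ≤ C₀) (y : Fin n → Fin q) :
    ∑ i, mm A J h y i ≤ 2 * Js J * (C₀ * n) := by
  have hx : ∀ j s, 0 ≤ xVec y j s ∧ xVec y j s ≤ 1 :=
    fun j s => ⟨xVec_nonneg y j s, xVec_le_one y j s⟩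
  have hw : ∀ j s, 0 ≤ xHat A J h y j s ∧ xHat A J h y j s ≤ 1 :=
    fun j s => ⟨xHat_nonneg A J h y j s, xHat_le_one A J h y j s⟩
  have hCn : 0 ≤ C₀ * n := mul_nonneg hC0 (Nat.cast_nonneg n)
  have key : ∀ (z : Fin n → Fin q → ℝ), (∀ j s, 0 ≤ z j s ∧ z j s ≤ 1) →
      ∑ i, ∑ r, |gam A J z i r| ≤ Js J * (C₀ * n) := by
    intro z hz
    calc ∑ i, ∑ r, |gam A J z i r|
        ≤ ∑ i, ∑ r, ∑ s, |J r s| * |∑ j, A i j * z j s| :=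
          Finset.sum_le_sum fun i _ => Finset.sum_le_sum fun r _ => gam_abs_le A J z hz i r
      _ = ∑ r, ∑ s, |J r s| * ∑ i, |∑ j, A i j * z j s| := by
          rw [Finset.sum_comm (f := fun (i : Fin n) (r : Fin q) =>
            ∑ s, |J r s| * |∑ j, A i j * z j s|)]
          refine Finset.sum_congr rfl fun r _ => ?_
          rw [Finset.sum_comm (f := fun (i : Fin n) (s : Fin q) =>
            |J r s| * |∑ j, A i j * z j s|)]
          refine Finset.sum_congr rfl fun s _ => ?_
          rw [Finset.mul_sum]
      _ ≤ ∑ r, ∑ s, |J r s| * (C₀ * n) := by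
          refine Finset.sum_le_sum fun r _ => Finset.sum_le_sum fun s _ =>
            mul_le_mul_of_nonneg_left ?_ (abs_nonneg _)
          exact hC (fun j => z j s) (fun j => ⟨(hz j s).1, (hz j s).2⟩)
      _ = (∑ r, ∑ s, |J r s|) * (C₀ * n) := by
          rw [Finset.sum_mul]
          exact Finset.sum_congr rfl fun r _ => (Finset.sum_mul _ _ _).symm
      _ ≤ Js J * (C₀ * n) := by
          refine mul_le_mul_of_nonneg_right ?_ hCn
          unfold Js; linarith
  have h1 := key (xVec y) hx
  have h2 := key (xHat A J h y) hw
  unfold mm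
  rw [Finset.sum_congr rfl fun i (_ : i ∈ Finset.univ) =>
    (Finset.sum_add_distrib (f := fun r => |gam A J (xVec y) i r|)
      (g := fun r => |gam A J (xHat A J h y) i r|)), Finset.sum_add_distrib]
  linarith

omit [NeZero q] in
lemma trace_eq_sum_rho (hA : A.IsSymm) : Matrix.trace (A * A) = ∑ i, rho A i := by
  unfold rho
  rw [Matrix.trace]
  refine Finset.sum_congr rfl fun i _ => ?_
  rw [Matrix.diag_apply, Matrix.mul_apply]
  refine Finset.sum_congr rfl fun j _ => ?_
  rw [hA.apply i j, sq]

omit [NeZero q] in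
lemma quad_Pm_le (hA : A.IsSymm) (v : Fin n → ℝ) :
    ∑ i, ∑ k, v i * v k * Pm A i k ≤ (∑ j, rho A j) * ∑ i, (v i)^2 := by
  have e1 : ∑ i, ∑ k, v i * v k * Pm A i k
      = ∑ j, (∑ i, v i * |A i j|) * (∑ k, v k * |A j k|) := by
    have step : ∀ i k, v i * v k * Pm A i k = ∑ j, (v i * |A i j|) * (v k * |A j k|) := by
      intro i k
      unfold Pm
      rw [Finset.mul_sum]
      refine Finset.sum_congr rfl fun j _ => by ring
    rw [Finset.sum_congr rfl fun i _ => Finset.sum_congr rfl fun k _ => step i k]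
    rw [Finset.sum_congr rfl fun i (_ : i ∈ Finset.univ) =>
      Finset.sum_comm (f := fun (k : Fin n) (j : Fin n) => (v i * |A i j|) * (v k * |A j k|))]
    rw [Finset.sum_comm (f := fun (i : Fin n) (j : Fin n) =>
      ∑ k, (v i * |A i j|) * (v k * |A j k|))]
    refine Finset.sum_congr rfl fun j _ => ?_
    rw [Finset.sum_mul_sum]
  rw [e1]
  have e2 : ∀ j, (∑ i, v i * |A i j|) * (∑ k, v k * |A j k|) = (∑ i, v i * |A i j|)^2 := by
    intro j
    rw [sq]
    congr 1
    refine Finset.sum_congr rfl fun k _ => ?_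
    rw [← hA.apply k j]
  rw [Finset.sum_congr rfl fun j _ => e2 j]
  calc ∑ j, (∑ i, v i * |A i j|)^2
      ≤ ∑ j, (∑ i, (v i)^2) * (∑ i, |A i j|^2) :=
        Finset.sum_le_sum fun j _ => Finset.sum_mul_sq_le_sq_mul_sq _ _ _
    _ = (∑ i, (v i)^2) * ∑ j, ∑ i, |A i j|^2 := by rw [Finset.mul_sum]
    _ = (∑ j, rho A j) * ∑ i, (v i)^2 := by
        rw [mul_comm]
        congr 1
        rw [Finset.sum_comm]
        unfold rho
        exact Finset.sum_congr rfl fun i _ => Finset.sum_congr rfl fun j _ => sq_abs _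

omit [NeZero q] in
lemma min_le_sqrt_mul {a b : ℝ} (ha : 0 ≤ a) (hb : 0 ≤ b) :
    min a b ≤ Real.sqrt a * Real.sqrt b := by
  rw [← Real.sqrt_mul_self (le_min ha hb), ← Real.sqrt_mul ha]
  exact Real.sqrt_le_sqrt (mul_le_mul (min_le_left a b) (min_le_right a b)
    (le_min ha hb) ha)

end Bounds
end PottsProof
namespace PottsProof
open Function

variable {n q : ℕ} [NeZero q]

section Cross
variable (A : Matrix (Fin n) (Fin n) ℝ) (J : Matrix (Fin q) (Fin q) ℝ) (h : Fin q → ℝ)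

noncomputable def ebar (i : Fin n) : ℝ := Ex A J h (fun y => mm A J h y i)

lemma ebar_nonneg (i : Fin n) : 0 ≤ ebar A J h i :=
  Ex_nonneg A J h fun y => mm_nonneg A J h y i

lemma Ex_add_const (f : (Fin n → Fin q) → ℝ) (c : ℝ) :
    Ex A J h (fun y => f y + c) = Ex A J h f + c := by
  unfold Ex
  simp only [mul_add]
  rw [Finset.sum_add_distrib, ← Finset.sum_mul, weight_sum, one_mul]

lemma Ex_mm_update_le (hdiag : ∀ i, A i i = 0) (hside : Js J * alp A ≤ 1) (i k : Fin n) :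
    Ex A J h (fun y => mm A J h (Function.update y i 0) k)
      ≤ ebar A J h k + q * (Js J * |A k i| + Js J * (Lc J * Pm A k i)) := by
  have hpt : ∀ y, mm A J h (Function.update y i 0) k
      ≤ mm A J h y k + q * (Js J * |A k i| + Js J * (Lc J * Pm A k i)) := by
    intro y
    have := (abs_le.1 (mm_update_abs A J h hdiag hside y i 0 k)).2
    linarith
  calc Ex A J h (fun y => mm A J h (Function.update y i 0) k)
      ≤ Ex A J h (fun y => mm A J h y k + q * (Js J * |A k i| + Js J * (Lc J * Pm A k i))) :=
        Ex_mono A J h hpt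
    _ = ebar A J h k + q * (Js J * |A k i| + Js J * (Lc J * Pm A k i)) :=
        Ex_add_const A J h _ _

lemma cross_bound (hA : A.IsSymm) (hJ : J.IsSymm) (hdiag : ∀ i, A i i = 0)
    (hside : Js J * alp A ≤ 1) (i k : Fin n) (hki : k ≠ i) :
    |Ex A J h (fun y => uu A J h y i * uu A J h y k)|
      ≤ q * (Js J * (Lc J * rho A i)) *
          (ebar A J h k + q * (Js J * |A k i| + Js J * (Lc J * Pm A k i)))
        + Lc J * |A k i| *
            Ex A J h (fun y => mm A J h y i * mm A J h (Function.update y i 0) k)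
        + q * (Js J * |A k i| + Js J * (Lc J * Pm A k i)) * ebar A J h i := by
  -- expand u_i u_k over r
  have expand : ∀ y, uu A J h y i * uu A J h y k
      = ∑ r, Dd A J h y i r * (Gg A J h y i r * uu A J h y k) := by
    intro y
    rw [uu, Finset.sum_mul]
    exact Finset.sum_congr rfl fun r _ => by ring
  have step0 : Ex A J h (fun y => uu A J h y i * uu A J h y k)
      = ∑ r, ∑ y : Fin n → Fin q, pottsWeight A J h y *
          (Dd A J h y i r * (Gg A J h y i r * uu A J h y k)) := by
    unfold Ex
    simp only [expand, Finset.mul_sum]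
    exact Finset.sum_comm
  -- the conditionally-centered part vanishes
  have hzero : ∀ r : Fin q, ∑ y : Fin n → Fin q, pottsWeight A J h y *
      (Dd A J h y i r * (Gg A J h (Function.update y i 0) i r *
        uu A J h (Function.update y i 0) k)) = 0 := by
    intro r
    refine cond_zero A J h hA hJ hdiag i r _ ?_
    intro y t
    simp [Function.update_idem]
  have step1 : ∀ r : Fin q, ∑ y : Fin n → Fin q, pottsWeight A J h y *
      (Dd A J h y i r * (Gg A J h y i r * uu A J h y k))
      = ∑ y : Fin n → Fin q, pottsWeight A J h y *
        (Dd A J h y i r * (Gg A J h y i r * uu A J h y k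
          - Gg A J h (Function.update y i 0) i r * uu A J h (Function.update y i 0) k)) := by
    intro r
    rw [← sub_zero (∑ y : Fin n → Fin q, pottsWeight A J h y *
      (Dd A J h y i r * (Gg A J h y i r * uu A J h y k))), ← hzero r,
      ← Finset.sum_sub_distrib]
    exact Finset.sum_congr rfl fun y _ => by ring
  -- pointwise bound
  have ptbound : ∀ (r : Fin q) (y : Fin n → Fin q),
      |Dd A J h y i r * (Gg A J h y i r * uu A J h y k
        - Gg A J h (Function.update y i 0) i r * uu A J h (Function.update y i 0) k)|
      ≤ Js J * (Lc J * rho A i) * mm A J h (Function.update y i 0) k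
        + (|gam A J (xVec y) i r| + |gam A J (xHat A J h y) i r|) *
            (Lc J * |A k i| * mm A J h (Function.update y i 0) k
              + q * (Js J * |A k i| + Js J * (Lc J * Pm A k i))) := by
    intro r y
    rw [abs_mul]
    have hD := Dd_abs_le_one A J h y i r
    have hsplit : Gg A J h y i r * uu A J h y k
        - Gg A J h (Function.update y i 0) i r * uu A J h (Function.update y i 0) k
        = (Gg A J h y i r - Gg A J h (Function.update y i 0) i r) *
            uu A J h (Function.update y i 0) k
          + Gg A J h y i r * (uu A J h y k - uu A J h (Function.update y i 0) k) := by
      ring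
    have habs : |Gg A J h y i r * uu A J h y k
        - Gg A J h (Function.update y i 0) i r * uu A J h (Function.update y i 0) k|
        ≤ Js J * (Lc J * rho A i) * mm A J h (Function.update y i 0) k
          + (|gam A J (xVec y) i r| + |gam A J (xHat A J h y) i r|) *
            (Lc J * |A k i| * mm A J h (Function.update y i 0) k
              + q * (Js J * |A k i| + Js J * (Lc J * Pm A k i))) := by
      rw [hsplit]
      refine (abs_add_le _ _).trans (add_le_add ?_ ?_)
      · rw [abs_mul]
        have h1 : |Gg A J h y i r - Gg A J h (Function.update y i 0) i r|
            ≤ Js J * (Lc J * rho A i) := by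
          rw [abs_sub_comm]
          exact Gg_update_abs_self A J h hA hdiag hside y i 0 r
        have h2 : |uu A J h (Function.update y i 0) k|
            ≤ mm A J h (Function.update y i 0) k := uu_abs_le_mm A J h _ k
        exact mul_le_mul h1 h2 (abs_nonneg _)
          (mul_nonneg (Js_pos J).le (mul_nonneg (Lc_nonneg J) (rho_nonneg A i)))
      · rw [abs_mul]
        have h3 : |Gg A J h y i r|
            ≤ |gam A J (xVec y) i r| + |gam A J (xHat A J h y) i r| := Gg_abs_le A J h y i r
        have h4 : |uu A J h y k - uu A J h (Function.update y i 0) k|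
            ≤ Lc J * |A k i| * mm A J h (Function.update y i 0) k
              + q * (Js J * |A k i| + Js J * (Lc J * Pm A k i)) := by
          rw [abs_sub_comm]
          exact uu_update_abs A J h hdiag hside y i 0 k hki
        exact mul_le_mul h3 h4 (abs_nonneg _) (add_nonneg (abs_nonneg _) (abs_nonneg _))
    calc |Dd A J h y i r| * |Gg A J h y i r * uu A J h y k
        - Gg A J h (Function.update y i 0) i r * uu A J h (Function.update y i 0) k|
        ≤ 1 * |Gg A J h y i r * uu A J h y k
          - Gg A J h (Function.update y i 0) i r * uu A J h (Function.update y i 0) k| :=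
          mul_le_mul_of_nonneg_right hD (abs_nonneg _)
      _ = _ := one_mul _
      _ ≤ _ := habs
  -- combine
  have absbound : |Ex A J h (fun y => uu A J h y i * uu A J h y k)|
      ≤ ∑ y : Fin n → Fin q, pottsWeight A J h y *
          (q * (Js J * (Lc J * rho A i)) * mm A J h (Function.update y i 0) k
            + mm A J h y i *
              (Lc J * |A k i| * mm A J h (Function.update y i 0) k
                + q * (Js J * |A k i| + Js J * (Lc J * Pm A k i)))) := by
    rw [step0, Finset.sum_congr rfl fun r _ => step1 r]
    refine (Finset.abs_sum_le_sum_abs _ _).trans ?_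
    have hr : ∀ r : Fin q, |∑ y : Fin n → Fin q, pottsWeight A J h y *
        (Dd A J h y i r * (Gg A J h y i r * uu A J h y k
          - Gg A J h (Function.update y i 0) i r * uu A J h (Function.update y i 0) k))|
        ≤ ∑ y : Fin n → Fin q, pottsWeight A J h y *
          (Js J * (Lc J * rho A i) * mm A J h (Function.update y i 0) k
            + (|gam A J (xVec y) i r| + |gam A J (xHat A J h y) i r|) *
              (Lc J * |A k i| * mm A J h (Function.update y i 0) k
                + q * (Js J * |A k i| + Js J * (Lc J * Pm A k i)))) := by
      intro r
      refine (Finset.abs_sum_le_sum_abs _ _).trans (Finset.sum_le_sum fun y _ => ?_)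
      rw [abs_mul, abs_of_nonneg (weight_nonneg A J h y)]
      exact mul_le_mul_of_nonneg_left (ptbound r y) (weight_nonneg A J h y)
    refine (Finset.sum_le_sum fun r _ => hr r).trans (le_of_eq ?_)
    rw [Finset.sum_comm]
    refine Finset.sum_congr rfl fun y _ => ?_
    rw [← Finset.mul_sum]
    congr 1
    rw [Finset.sum_add_distrib, Finset.sum_const, Finset.card_univ, Fintype.card_fin,
      nsmul_eq_mul, ← Finset.sum_mul]
    rw [show (∑ r, (|gam A J (xVec y) i r| + |gam A J (xHat A J h y) i r|)) = mm A J h y i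
      from rfl]
    ring
  -- identify the RHS as a linear combination of expectations
  have lin : ∑ y : Fin n → Fin q, pottsWeight A J h y *
      (q * (Js J * (Lc J * rho A i)) * mm A J h (Function.update y i 0) k
        + mm A J h y i *
          (Lc J * |A k i| * mm A J h (Function.update y i 0) k
            + q * (Js J * |A k i| + Js J * (Lc J * Pm A k i))))
      = q * (Js J * (Lc J * rho A i)) *
          Ex A J h (fun y => mm A J h (Function.update y i 0) k)
        + Lc J * |A k i| *
            Ex A J h (fun y => mm A J h y i * mm A J h (Function.update y i 0) k)
        + q * (Js J * |A k i| + Js J * (Lc J * Pm A k i)) * ebar A J h i := by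
    unfold ebar Ex
    simp only [Finset.mul_sum, ← Finset.sum_add_distrib]
    exact Finset.sum_congr rfl fun y _ => by ring
  refine (absbound.trans (le_of_eq lin)).trans ?_
  have hmono := Ex_mm_update_le A J h hdiag hside i k
  have hc : 0 ≤ q * (Js J * (Lc J * rho A i)) := by
    have := Js_pos J
    have := Lc_nonneg J
    have := rho_nonneg A i
    positivity
  have := mul_le_mul_of_nonneg_left hmono hc
  linarith

end Cross
end PottsProof
namespace PottsProof
open Function

variable {n q : ℕ} [NeZero q]

section Assemble
variable (A : Matrix (Fin n) (Fin n) ℝ) (J : Matrix (Fin q) (Fin q) ℝ) (h : Fin q → ℝ)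

lemma Ex_const_mul (c : ℝ) (f : (Fin n → Fin q) → ℝ) :
    Ex A J h (fun y => c * f y) = c * Ex A J h f := by
  unfold Ex
  rw [Finset.mul_sum]
  exact Finset.sum_congr rfl fun y _ => by ring

lemma sum_ebar_eq : ∑ i, ebar A J h i = Ex A J h (fun y => ∑ i, mm A J h y i) := by
  unfold ebar Ex
  rw [Finset.sum_comm]
  exact Finset.sum_congr rfl fun y _ => (Finset.mul_sum _ _ _).symm

lemma Ecross_symm (i k : Fin n) :
    Ex A J h (fun y => uu A J h y i * uu A J h y k)
      = Ex A J h (fun y => uu A J h y k * uu A J h y i) := by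
  unfold Ex
  exact Finset.sum_congr rfl fun y _ => by ring

lemma Ecross_diag_le (hA : A.IsSymm) (i : Fin n) :
    |Ex A J h (fun y => uu A J h y i * uu A J h y i)|
      ≤ 2 * Js J * ((n:ℝ) * alp A) * ebar A J h i := by
  have h1 : ∀ y, uu A J h y i * uu A J h y i ≤ (2 * Js J * ((n:ℝ) * alp A)) * mm A J h y i := by
    intro y
    have hu := uu_abs_le_mm A J h y i
    have hm := mm_le_sup A J h y i
    have hm0 := mm_nonneg A J h y i
    nlinarith [abs_nonneg (uu A J h y i), sq_abs (uu A J h y i),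
      neg_abs_le (uu A J h y i), le_abs_self (uu A J h y i)]
  have h2 : Ex A J h (fun y => uu A J h y i * uu A J h y i)
      ≤ (2 * Js J * ((n:ℝ) * alp A)) * ebar A J h i := by
    refine (Ex_mono A J h h1).trans (le_of_eq ?_)
    rw [Ex_const_mul A J h]
    rfl
  have h3 : 0 ≤ Ex A J h (fun y => uu A J h y i * uu A J h y i) :=
    Ex_nonneg A J h fun y => mul_self_nonneg _
  rw [abs_of_nonneg h3]
  exact h2

end Assemble
end PottsProof
namespace PottsProof
open Function

variable {n q : ℕ} [NeZero q]

section Pair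
variable (A : Matrix (Fin n) (Fin n) ℝ) (J : Matrix (Fin q) (Fin q) ℝ) (h : Fin q → ℝ)

noncomputable def Mik (i k : Fin n) : ℝ :=
  Ex A J h (fun y => mm A J h y i * mm A J h (Function.update y i 0) k)

noncomputable def Psib (i k : Fin n) : ℝ :=
  q * (Js J * Lc J) * rho A i * ebar A J h k
    + q^2 * (Js J)^2 * Lc J * rho A i * |A k i|
    + Lc J * |A k i| * Mik A J h i k
    + q * Js J * |A k i| * ebar A J h i

noncomputable def wgt (i : Fin n) : ℝ :=
  q * (Js J * Lc J) * (q * (Js J * Lc J) * rho A i + ebar A J h i)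

lemma Mik_nonneg (i k : Fin n) : 0 ≤ Mik A J h i k :=
  Ex_nonneg A J h fun y => mul_nonneg (mm_nonneg A J h y i) (mm_nonneg A J h _ k)

lemma Psib_nonneg (i k : Fin n) : 0 ≤ Psib A J h i k := by
  have := Js_pos J
  have := Lc_nonneg J
  have := rho_nonneg A i
  have := ebar_nonneg A J h k
  have := ebar_nonneg A J h i
  have := Mik_nonneg A J h i k
  have : (0:ℝ) ≤ |A k i| := abs_nonneg _
  unfold Psib
  positivity

lemma wgt_nonneg (i : Fin n) : 0 ≤ wgt A J h i := by
  have := Js_pos J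
  have := Lc_nonneg J
  have := rho_nonneg A i
  have := ebar_nonneg A J h i
  unfold wgt
  positivity

lemma pair_bound (hA : A.IsSymm) (hJ : J.IsSymm) (hdiag : ∀ i, A i i = 0)
    (hside : Js J * alp A ≤ 1) (i k : Fin n) (hki : k ≠ i) :
    |Ex A J h (fun y => uu A J h y i * uu A J h y k)|
      ≤ Psib A J h i k + Psib A J h k i
        + Real.sqrt (wgt A J h i) * Real.sqrt (wgt A J h k) * Pm A i k := by
  have b1 : |Ex A J h (fun y => uu A J h y i * uu A J h y k)|
      ≤ Psib A J h i k + wgt A J h i * Pm A k i := by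
    refine (cross_bound A J h hA hJ hdiag hside i k hki).trans (le_of_eq ?_)
    unfold Psib wgt Mik
    ring
  have b2 : |Ex A J h (fun y => uu A J h y i * uu A J h y k)|
      ≤ Psib A J h k i + wgt A J h k * Pm A i k := by
    rw [Ecross_symm]
    refine (cross_bound A J h hA hJ hdiag hside k i (fun e => hki e.symm)).trans (le_of_eq ?_)
    unfold Psib wgt Mik
    ring
  have hP := Pm_nonneg A i k
  have hw1 := wgt_nonneg A J h i
  have hw2 := wgt_nonneg A J h k
  have hΨ1 := Psib_nonneg A J h i k
  have hΨ2 := Psib_nonneg A J h k i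
  have hminW : min (wgt A J h i * Pm A k i) (wgt A J h k * Pm A i k)
      ≤ Real.sqrt (wgt A J h i) * Real.sqrt (wgt A J h k) * Pm A i k := by
    rw [Pm_symm A hA k i]
    have heq : min (wgt A J h i * Pm A i k) (wgt A J h k * Pm A i k)
        = min (wgt A J h i) (wgt A J h k) * Pm A i k := by
      rcases le_total (wgt A J h i) (wgt A J h k) with hc | hc
      · rw [min_eq_left hc, min_eq_left (mul_le_mul_of_nonneg_right hc hP)]
      · rw [min_eq_right hc, min_eq_right (mul_le_mul_of_nonneg_right hc hP)]
    rw [heq]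
    exact mul_le_mul_of_nonneg_right (min_le_sqrt_mul hw1 hw2) hP
  rcases le_total (wgt A J h i * Pm A k i) (wgt A J h k * Pm A i k) with hc | hc
  · rw [min_eq_left hc] at hminW
    linarith
  · rw [min_eq_right hc] at hminW
    linarith

end Pair
end PottsProof
namespace PottsProof
open Function

variable {n q : ℕ} [NeZero q]

section Master
variable (A : Matrix (Fin n) (Fin n) ℝ) (J : Matrix (Fin q) (Fin q) ℝ) (h : Fin q → ℝ)

lemma sum_ebar_le (C₀ : ℝ) (hC0 : 0 ≤ C₀)
    (hC : ∀ x : Fin n → ℝ, (∀ j, x j ∈ Set.Icc (0:ℝ) 1) → ∑ i, |∑ j, A i j * x j| ≤ C₀ * n) :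
    ∑ i, ebar A J h i ≤ 2 * Js J * (C₀ * n) := by
  rw [sum_ebar_eq]
  exact Ex_le_const A J h fun y => sum_mm_le A J h C₀ hC hC0 y

lemma sum_Mik_le (C₀ : ℝ) (hC0 : 0 ≤ C₀)
    (hC : ∀ x : Fin n → ℝ, (∀ j, x j ∈ Set.Icc (0:ℝ) 1) → ∑ i, |∑ j, A i j * x j| ≤ C₀ * n)
    (i : Fin n) :
    ∑ k, Mik A J h i k ≤ 2 * Js J * (C₀ * n) * ebar A J h i := by
  have e1 : ∑ k, Mik A J h i k
      = Ex A J h (fun y => mm A J h y i * ∑ k, mm A J h (Function.update y i 0) k) := by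
    unfold Mik Ex
    rw [Finset.sum_comm]
    refine Finset.sum_congr rfl fun y _ => ?_
    rw [← Finset.mul_sum, ← Finset.mul_sum]
  rw [e1]
  have hpt : ∀ y, mm A J h y i * ∑ k, mm A J h (Function.update y i 0) k
      ≤ (2 * Js J * (C₀ * n)) * mm A J h y i := by
    intro y
    have h1 := sum_mm_le A J h C₀ hC hC0 (Function.update y i 0)
    have h2 := mm_nonneg A J h y i
    nlinarith
  refine (Ex_mono A J h hpt).trans (le_of_eq ?_)
  rw [Ex_const_mul A J h]
  rfl

lemma sum_wgt_eq : ∑ i, wgt A J h i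
    = q * (Js J * Lc J) * (q * (Js J * Lc J) * (∑ i, rho A i) + ∑ i, ebar A J h i) := by
  unfold wgt
  rw [← Finset.mul_sum, Finset.sum_add_distrib, ← Finset.mul_sum]

lemma sum_sqrt_wgt_Pm_le (hA : A.IsSymm) :
    ∑ i, ∑ k, Real.sqrt (wgt A J h i) * Real.sqrt (wgt A J h k) * Pm A i k
      ≤ (∑ j, rho A j) * ∑ i, wgt A J h i := by
  have hq := quad_Pm_le A hA (fun i => Real.sqrt (wgt A J h i))
  have e : ∑ i, (Real.sqrt (wgt A J h i))^2 = ∑ i, wgt A J h i :=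
    Finset.sum_congr rfl fun i _ => Real.sq_sqrt (wgt_nonneg A J h i)
  rw [e] at hq
  exact hq

lemma col_abs_le (i : Fin n) : ∑ k, |A k i| ≤ (n:ℝ) * alp A := by
  calc ∑ k, |A k i| ≤ ∑ _k : Fin n, alp A := Finset.sum_le_sum fun k _ => abs_le_alp A k i
    _ = (n:ℝ) * alp A := by
        rw [Finset.sum_const, Finset.card_univ, Fintype.card_fin, nsmul_eq_mul]

lemma sum_Psib_le (hA : A.IsSymm) (C₀ : ℝ) (hC0 : 0 ≤ C₀)
    (hC : ∀ x : Fin n → ℝ, (∀ j, x j ∈ Set.Icc (0:ℝ) 1) → ∑ i, |∑ j, A i j * x j| ≤ C₀ * n) :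
    ∑ i, ∑ k, Psib A J h i k
      ≤ q * (Js J * Lc J) * ((∑ i, rho A i) * (∑ i, ebar A J h i))
        + q^2 * (Js J)^2 * Lc J * ((∑ i, rho A i) * ((n:ℝ) * alp A))
        + Lc J * (alp A * (2 * Js J * (C₀ * n) * (∑ i, ebar A J h i)))
        + q * Js J * (((n:ℝ) * alp A) * (∑ i, ebar A J h i)) := by
  have split : ∑ i, ∑ k, Psib A J h i k
      = q * (Js J * Lc J) * (∑ i, ∑ k, rho A i * ebar A J h k)
        + q^2 * (Js J)^2 * Lc J * (∑ i, ∑ k, rho A i * |A k i|)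
        + Lc J * (∑ i, ∑ k, |A k i| * Mik A J h i k)
        + q * Js J * (∑ i, ∑ k, |A k i| * ebar A J h i) := by
    unfold Psib
    simp only [Finset.mul_sum, ← Finset.sum_add_distrib]
    exact Finset.sum_congr rfl fun i _ => Finset.sum_congr rfl fun k _ => by ring
  rw [split]
  have ha : ∑ i, ∑ k, rho A i * ebar A J h k = (∑ i, rho A i) * (∑ i, ebar A J h i) := by
    rw [Finset.sum_mul_sum]
  have hb : ∑ i, ∑ k, rho A i * |A k i| ≤ (∑ i, rho A i) * ((n:ℝ) * alp A) := by
    rw [Finset.sum_mul]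
    refine Finset.sum_le_sum fun i _ => ?_
    rw [← Finset.mul_sum]
    exact mul_le_mul_of_nonneg_left (col_abs_le A i) (rho_nonneg A i)
  have hc2 : ∑ i, ∑ k, |A k i| * Mik A J h i k
      ≤ alp A * (2 * Js J * (C₀ * n) * (∑ i, ebar A J h i)) := by
    have step1 : ∀ i, ∑ k, |A k i| * Mik A J h i k ≤ alp A * ∑ k, Mik A J h i k := by
      intro i
      rw [Finset.mul_sum]
      refine Finset.sum_le_sum fun k _ => ?_
      exact mul_le_mul_of_nonneg_right (abs_le_alp A k i) (Mik_nonneg A J h i k)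
    calc ∑ i, ∑ k, |A k i| * Mik A J h i k
        ≤ ∑ i, alp A * ∑ k, Mik A J h i k := Finset.sum_le_sum fun i _ => step1 i
      _ ≤ ∑ i, alp A * (2 * Js J * (C₀ * n) * ebar A J h i) := by
          refine Finset.sum_le_sum fun i _ => ?_
          exact mul_le_mul_of_nonneg_left (sum_Mik_le A J h C₀ hC0 hC i) (alp_nonneg A)
      _ = alp A * (2 * Js J * (C₀ * n) * (∑ i, ebar A J h i)) := by
          rw [← Finset.mul_sum, ← Finset.mul_sum]
  have hd : ∑ i, ∑ k, |A k i| * ebar A J h i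
      ≤ ((n:ℝ) * alp A) * ∑ i, ebar A J h i := by
    rw [Finset.mul_sum]
    refine Finset.sum_le_sum fun i _ => ?_
    rw [← Finset.sum_mul]
    exact mul_le_mul_of_nonneg_right (col_abs_le A i) (ebar_nonneg A J h i)
  have c1 : (0:ℝ) ≤ q * (Js J * Lc J) :=
    mul_nonneg (Nat.cast_nonneg q) (mul_nonneg (Js_pos J).le (Lc_nonneg J))
  have c2 : (0:ℝ) ≤ q^2 * (Js J)^2 * Lc J := by
    have := Js_pos J
    have := Lc_nonneg J
    positivity
  have c3 : (0:ℝ) ≤ Lc J := Lc_nonneg J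
  have c4 : (0:ℝ) ≤ q * Js J := mul_nonneg (Nat.cast_nonneg q) (Js_pos J).le
  have := mul_le_mul_of_nonneg_left hb c2
  have := mul_le_mul_of_nonneg_left hc2 c3
  have := mul_le_mul_of_nonneg_left hd c4
  rw [ha]
  linarith

end Master
end PottsProof
namespace PottsProof
open Function

variable {n q : ℕ} [NeZero q]

section Final
variable (A : Matrix (Fin n) (Fin n) ℝ) (J : Matrix (Fin q) (Fin q) ℝ) (h : Fin q → ℝ)

lemma master_bound (hA : A.IsSymm) (hJ : J.IsSymm) (hdiag : ∀ i, A i i = 0)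
    (hside : Js J * alp A ≤ 1) (C₀ : ℝ) (hC0 : 0 ≤ C₀)
    (hC : ∀ x : Fin n → ℝ, (∀ j, x j ∈ Set.Icc (0:ℝ) 1) → ∑ i, |∑ j, A i j * x j| ≤ C₀ * n) :
    ∑ y : Fin n → Fin q, pottsWeight A J h y *
        (Fquad A J (xVec y) - Fquad A J (xHat A J h y))^2
      ≤ 2 * Js J * ((n:ℝ) * alp A) * (2 * Js J * (C₀ * n))
        + 2 * ( q * (Js J * Lc J) * ((∑ i, rho A i) * (2 * Js J * (C₀ * n)))
            + q^2 * (Js J)^2 * Lc J * ((∑ i, rho A i) * ((n:ℝ) * alp A))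
            + Lc J * (alp A * (2 * Js J * (C₀ * n) * (2 * Js J * (C₀ * n))))
            + q * Js J * (((n:ℝ) * alp A) * (2 * Js J * (C₀ * n))) )
        + (∑ i, rho A i) *
            (q * (Js J * Lc J) * (q * (Js J * Lc J) * (∑ i, rho A i)
              + 2 * Js J * (C₀ * n))) := by
  have hτ0 : 0 ≤ ∑ i, rho A i := Finset.sum_nonneg fun i _ => rho_nonneg A i
  have hEb0 : 0 ≤ ∑ i, ebar A J h i := Finset.sum_nonneg fun i _ => ebar_nonneg A J h i
  have hEb : ∑ i, ebar A J h i ≤ 2 * Js J * (C₀ * n) := sum_ebar_le A J h C₀ hC0 hC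
  have hα0 : 0 ≤ alp A := alp_nonneg A
  have hJs : (0:ℝ) < Js J := Js_pos J
  have hLc : (0:ℝ) ≤ Lc J := Lc_nonneg J
  have hq0 : (0:ℝ) ≤ (q:ℝ) := Nat.cast_nonneg q
  have hn0 : (0:ℝ) ≤ (n:ℝ) := Nat.cast_nonneg n
  have hCn0 : (0:ℝ) ≤ 2 * Js J * (C₀ * n) := by positivity
  have hnα0 : (0:ℝ) ≤ (n:ℝ) * alp A := mul_nonneg hn0 hα0
  -- Step 1: identity
  have hLT : ∑ y : Fin n → Fin q, pottsWeight A J h y *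
      (Fquad A J (xVec y) - Fquad A J (xHat A J h y))^2
      = (1/4) * ∑ y : Fin n → Fin q, pottsWeight A J h y * (∑ i, uu A J h y i)^2 := by
    rw [Finset.mul_sum]
    refine Finset.sum_congr rfl fun y _ => ?_
    rw [Fquad_diff A J h hA hJ y]
    ring
  have hT0 : 0 ≤ ∑ y : Fin n → Fin q, pottsWeight A J h y * (∑ i, uu A J h y i)^2 :=
    Finset.sum_nonneg fun y _ => mul_nonneg (weight_nonneg A J h y) (sq_nonneg _)
  -- Step 2: expand the square
  have hTeq : ∑ y : Fin n → Fin q, pottsWeight A J h y * (∑ i, uu A J h y i)^2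
      = ∑ i, ∑ k, Ex A J h (fun y => uu A J h y i * uu A J h y k) := by
    have hsq : ∀ y : Fin n → Fin q, pottsWeight A J h y * (∑ i, uu A J h y i)^2
        = ∑ i, ∑ k, pottsWeight A J h y * (uu A J h y i * uu A J h y k) := by
      intro y
      rw [sq, Finset.sum_mul_sum, Finset.mul_sum]
      exact Finset.sum_congr rfl fun i _ => by rw [Finset.mul_sum]
    calc ∑ y : Fin n → Fin q, pottsWeight A J h y * (∑ i, uu A J h y i)^2
        = ∑ y : Fin n → Fin q, ∑ i, ∑ k,
            pottsWeight A J h y * (uu A J h y i * uu A J h y k) :=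
          Finset.sum_congr rfl fun y _ => hsq y
      _ = ∑ i, ∑ y : Fin n → Fin q, ∑ k,
            pottsWeight A J h y * (uu A J h y i * uu A J h y k) := Finset.sum_comm
      _ = ∑ i, ∑ k, ∑ y : Fin n → Fin q,
            pottsWeight A J h y * (uu A J h y i * uu A J h y k) :=
          Finset.sum_congr rfl fun i _ => Finset.sum_comm
      _ = ∑ i, ∑ k, Ex A J h (fun y => uu A J h y i * uu A J h y k) := rfl
  -- Step 3: bound by the diagonal + off-diagonal
  have hperi : ∀ i : Fin n,
      ∑ k, |Ex A J h (fun y => uu A J h y i * uu A J h y k)|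
      ≤ 2 * Js J * ((n:ℝ) * alp A) * ebar A J h i
        + ∑ k, (Psib A J h i k + Psib A J h k i
            + Real.sqrt (wgt A J h i) * Real.sqrt (wgt A J h k) * Pm A i k) := by
    intro i
    rw [← Finset.add_sum_erase _ _ (Finset.mem_univ i)]
    have hbd : ∑ k ∈ Finset.univ.erase i,
        |Ex A J h (fun y => uu A J h y i * uu A J h y k)|
        ≤ ∑ k ∈ Finset.univ.erase i, (Psib A J h i k + Psib A J h k i
            + Real.sqrt (wgt A J h i) * Real.sqrt (wgt A J h k) * Pm A i k) :=
      Finset.sum_le_sum fun k hk =>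
        pair_bound A J h hA hJ hdiag hside i k (Finset.ne_of_mem_erase hk)
    have hext : ∑ k ∈ Finset.univ.erase i, (Psib A J h i k + Psib A J h k i
          + Real.sqrt (wgt A J h i) * Real.sqrt (wgt A J h k) * Pm A i k)
        ≤ ∑ k, (Psib A J h i k + Psib A J h k i
            + Real.sqrt (wgt A J h i) * Real.sqrt (wgt A J h k) * Pm A i k) := by
      refine Finset.sum_le_sum_of_subset_of_nonneg (Finset.subset_univ _) fun k _ _ => ?_
      have := Psib_nonneg A J h i k
      have := Psib_nonneg A J h k i
      have : 0 ≤ Real.sqrt (wgt A J h i) * Real.sqrt (wgt A J h k) * Pm A i k :=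
        mul_nonneg (mul_nonneg (Real.sqrt_nonneg _) (Real.sqrt_nonneg _)) (Pm_nonneg A i k)
      linarith [Psib_nonneg A J h i k, Psib_nonneg A J h k i]
    exact add_le_add (Ecross_diag_le A J h hA i) (hbd.trans hext)
  -- Step 4: total
  have hTle : ∑ y : Fin n → Fin q, pottsWeight A J h y * (∑ i, uu A J h y i)^2
      ≤ 2 * Js J * ((n:ℝ) * alp A) * (∑ i, ebar A J h i)
        + (2 * (∑ i, ∑ k, Psib A J h i k)
          + ∑ i, ∑ k, Real.sqrt (wgt A J h i) * Real.sqrt (wgt A J h k) * Pm A i k) := by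
    rw [hTeq]
    have s1 : ∑ i, ∑ k, Ex A J h (fun y => uu A J h y i * uu A J h y k)
        ≤ ∑ i, ∑ k, |Ex A J h (fun y => uu A J h y i * uu A J h y k)| :=
      Finset.sum_le_sum fun i _ => Finset.sum_le_sum fun k _ => le_abs_self _
    refine (s1.trans (Finset.sum_le_sum fun i _ => hperi i)).trans (le_of_eq ?_)
    rw [Finset.sum_add_distrib, ← Finset.mul_sum]
    congr 1
    have e1 : ∑ i, ∑ k, (Psib A J h i k + Psib A J h k i
        + Real.sqrt (wgt A J h i) * Real.sqrt (wgt A J h k) * Pm A i k)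
        = (∑ i, ∑ k, Psib A J h i k) + (∑ i, ∑ k, Psib A J h k i)
          + ∑ i, ∑ k, Real.sqrt (wgt A J h i) * Real.sqrt (wgt A J h k) * Pm A i k := by
      rw [← Finset.sum_add_distrib, ← Finset.sum_add_distrib]
      exact Finset.sum_congr rfl fun i _ => by
        rw [← Finset.sum_add_distrib, ← Finset.sum_add_distrib]
    have e2 : ∑ i, ∑ k, Psib A J h k i = ∑ i, ∑ k, Psib A J h i k := Finset.sum_comm
    rw [e1, e2]
    ring
  -- Step 5: plug in the bounds
  have hSP := sum_Psib_le A J h hA C₀ hC0 hC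
  have hSQ := (sum_sqrt_wgt_Pm_le A J h hA).trans (le_of_eq (by rw [sum_wgt_eq]))
  -- monotone replacement of ∑ ebar by 2 Js C₀ n
  have m1 : 2 * Js J * ((n:ℝ) * alp A) * (∑ i, ebar A J h i)
      ≤ 2 * Js J * ((n:ℝ) * alp A) * (2 * Js J * (C₀ * n)) :=
    mul_le_mul_of_nonneg_left hEb (by positivity)
  have m2 : (∑ i, rho A i) * (∑ i, ebar A J h i)
      ≤ (∑ i, rho A i) * (2 * Js J * (C₀ * n)) :=
    mul_le_mul_of_nonneg_left hEb hτ0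
  have m3 : alp A * (2 * Js J * (C₀ * n) * (∑ i, ebar A J h i))
      ≤ alp A * (2 * Js J * (C₀ * n) * (2 * Js J * (C₀ * n))) :=
    mul_le_mul_of_nonneg_left (mul_le_mul_of_nonneg_left hEb hCn0) hα0
  have m4 : ((n:ℝ) * alp A) * (∑ i, ebar A J h i)
      ≤ ((n:ℝ) * alp A) * (2 * Js J * (C₀ * n)) :=
    mul_le_mul_of_nonneg_left hEb hnα0
  have m5 : (∑ i, rho A i) * (q * (Js J * Lc J) * (q * (Js J * Lc J) * (∑ i, rho A i)
        + ∑ i, ebar A J h i))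
      ≤ (∑ i, rho A i) * (q * (Js J * Lc J) * (q * (Js J * Lc J) * (∑ i, rho A i)
        + 2 * Js J * (C₀ * n))) := by
    refine mul_le_mul_of_nonneg_left (mul_le_mul_of_nonneg_left ?_ (by positivity)) hτ0
    linarith
  have cSP : (0:ℝ) ≤ 2 := by norm_num
  have cc1 : (0:ℝ) ≤ q * (Js J * Lc J) := by positivity
  have cc2 : (0:ℝ) ≤ q^2 * (Js J)^2 * Lc J := by positivity
  have cc3 : (0:ℝ) ≤ Lc J := hLc
  have cc4 : (0:ℝ) ≤ q * Js J := by positivity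
  have hSP2 := hSP
  have hm2' := mul_le_mul_of_nonneg_left m2 cc1
  have hm3' := mul_le_mul_of_nonneg_left m3 cc3
  have hm4' := mul_le_mul_of_nonneg_left m4 cc4
  rw [hLT]
  nlinarith [hTle, hSP, hSQ, hm2', hm3', hm4', m1, m5, hT0]
end Final
end PottsProof
theorem lemma_F_close
    (q : ℕ) (hq : 2 ≤ q) (J : Matrix (Fin q) (Fin q) ℝ) (hJ : J.IsSymm) (h : Fin q → ℝ)
    (A : (n : ℕ) → Matrix (Fin n) (Fin n) ℝ) (hsymm : ∀ n, (A n).IsSymm)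
    (hMF : meanFieldAssumption A)
    (hdiag : ∀ n : ℕ, ∀ i : Fin n, A n i i = 0)
    (hmax : Tendsto (fun n : ℕ => ⨆ i : Fin n, ⨆ j : Fin n, |A n i j|) atTop (nhds 0)) :
    Tendsto
      (fun n : ℕ =>
        (∑ y : Fin n → Fin q, pottsWeight (A n) J h y *
          (Fquad (A n) J (xVec y) - Fquad (A n) J (xHat (A n) J h y)) ^ 2) / (n : ℝ) ^ 2)
      atTop (nhds 0) := by
  haveI : NeZero q := ⟨by omega⟩
  obtain ⟨C, hCmf⟩ := hMF.1
  have ht : Tendsto (fun n : ℕ => Matrix.trace (A n * A n) / n) atTop (nhds 0) := hMF.2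
  have hJs : (0:ℝ) < PottsProof.Js J := PottsProof.Js_pos J
  have hLc : (0:ℝ) ≤ PottsProof.Lc J := PottsProof.Lc_nonneg J
  set C₀ : ℝ := |C| with hC₀def
  have hC0 : 0 ≤ C₀ := abs_nonneg C
  have hCn : ∀ n : ℕ, ∀ x : Fin n → ℝ, (∀ j, x j ∈ Set.Icc (0:ℝ) 1) →
      ∑ i, |∑ j, A n i j * x j| ≤ C₀ * n := by
    intro n x hx
    refine (hCmf n x hx).trans ?_
    exact mul_le_mul_of_nonneg_right (le_abs_self C) (Nat.cast_nonneg n)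
  set c1 : ℝ := 4*(PottsProof.Js J)^2*C₀ + 8*(PottsProof.Lc J)*(PottsProof.Js J)^2*C₀^2
      + 4*q*(PottsProof.Js J)^2*C₀ with hc1
  set c2 : ℝ := 6*q*(PottsProof.Js J)^2*(PottsProof.Lc J)*C₀ with hc2
  set c3 : ℝ := 2*q^2*(PottsProof.Js J)^2*(PottsProof.Lc J) with hc3
  set c4 : ℝ := (q*(PottsProof.Js J * PottsProof.Lc J))^2 with hc4
  have hg : Tendsto (fun n : ℕ => c1 * (⨆ i : Fin n, ⨆ j : Fin n, |A n i j|)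
      + c2 * (Matrix.trace (A n * A n)/n)
      + c3 * ((Matrix.trace (A n * A n)/n) * (⨆ i : Fin n, ⨆ j : Fin n, |A n i j|))
      + c4 * ((Matrix.trace (A n * A n)/n) * (Matrix.trace (A n * A n)/n)))
      atTop (nhds 0) := by
    have l1 := hmax.const_mul c1
    have l2 := ht.const_mul c2
    have l3 := (ht.mul hmax).const_mul c3
    have l4 := (ht.mul ht).const_mul c4
    have lall := ((l1.add l2).add l3).add l4
    simpa using lall
  have hnn : ∀ᶠ n : ℕ in atTop, 0 ≤
      (∑ y : Fin n → Fin q, pottsWeight (A n) J h y *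
        (Fquad (A n) J (xVec y) - Fquad (A n) J (xHat (A n) J h y)) ^ 2) / (n : ℝ) ^ 2 := by
    refine Filter.Eventually.of_forall fun n => ?_
    refine div_nonneg (Finset.sum_nonneg fun y _ => ?_) (sq_nonneg _)
    exact mul_nonneg (PottsProof.weight_nonneg (A n) J h y) (sq_nonneg _)
  have hev : ∀ᶠ n : ℕ in atTop,
      (∑ y : Fin n → Fin q, pottsWeight (A n) J h y *
        (Fquad (A n) J (xVec y) - Fquad (A n) J (xHat (A n) J h y)) ^ 2) / (n : ℝ) ^ 2
      ≤ c1 * (⨆ i : Fin n, ⨆ j : Fin n, |A n i j|)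
        + c2 * (Matrix.trace (A n * A n)/n)
        + c3 * ((Matrix.trace (A n * A n)/n) * (⨆ i : Fin n, ⨆ j : Fin n, |A n i j|))
        + c4 * ((Matrix.trace (A n * A n)/n) * (Matrix.trace (A n * A n)/n)) := by
    have hsmall : ∀ᶠ n : ℕ in atTop,
        (⨆ i : Fin n, ⨆ j : Fin n, |A n i j|) < 1 / PottsProof.Js J :=
      hmax.eventually (eventually_lt_nhds (by positivity))
    filter_upwards [hsmall, eventually_ge_atTop 1] with n hs hn1
    have hside : PottsProof.Js J * PottsProof.alp (A n) ≤ 1 := by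
      have halp : PottsProof.alp (A n) = ⨆ i : Fin n, ⨆ j : Fin n, |A n i j| := rfl
      rw [halp]
      have := (lt_div_iff₀ hJs).1 hs
      linarith
    have hmb := PottsProof.master_bound (A n) J h (hsymm n) hJ (hdiag n) hside C₀ hC0 (hCn n)
    have hn0 : (0:ℝ) < (n:ℝ)^2 := by
      have : (1:ℝ) ≤ (n:ℝ) := by exact_mod_cast hn1
      positivity
    have hnne : ((n:ℝ)) ≠ 0 := by
      have : (1:ℝ) ≤ (n:ℝ) := by exact_mod_cast hn1
      linarith
    have hτ : (∑ i, PottsProof.rho (A n) i) = (Matrix.trace (A n * A n)/n) * n := by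
      rw [← PottsProof.trace_eq_sum_rho (A n) (hsymm n), div_mul_cancel₀ _ hnne]
    calc (∑ y : Fin n → Fin q, pottsWeight (A n) J h y *
          (Fquad (A n) J (xVec y) - Fquad (A n) J (xHat (A n) J h y)) ^ 2) / (n : ℝ) ^ 2
        ≤ (2 * PottsProof.Js J * ((n:ℝ) * PottsProof.alp (A n)) * (2 * PottsProof.Js J * (C₀ * n))
          + 2 * ( q * (PottsProof.Js J * PottsProof.Lc J) *
                ((∑ i, PottsProof.rho (A n) i) * (2 * PottsProof.Js J * (C₀ * n)))
              + q^2 * (PottsProof.Js J)^2 * PottsProof.Lc J *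
                ((∑ i, PottsProof.rho (A n) i) * ((n:ℝ) * PottsProof.alp (A n)))
              + PottsProof.Lc J * (PottsProof.alp (A n) *
                (2 * PottsProof.Js J * (C₀ * n) * (2 * PottsProof.Js J * (C₀ * n))))
              + q * PottsProof.Js J * (((n:ℝ) * PottsProof.alp (A n)) *
                (2 * PottsProof.Js J * (C₀ * n))) )
          + (∑ i, PottsProof.rho (A n) i) *
              (q * (PottsProof.Js J * PottsProof.Lc J) *
                (q * (PottsProof.Js J * PottsProof.Lc J) * (∑ i, PottsProof.rho (A n) i)
                  + 2 * PottsProof.Js J * (C₀ * n)))) / (n:ℝ)^2 := by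
          gcongr
      _ = c1 * (⨆ i : Fin n, ⨆ j : Fin n, |A n i j|)
        + c2 * (Matrix.trace (A n * A n)/n)
        + c3 * ((Matrix.trace (A n * A n)/n) * (⨆ i : Fin n, ⨆ j : Fin n, |A n i j|))
        + c4 * ((Matrix.trace (A n * A n)/n) * (Matrix.trace (A n * A n)/n)) := by
          rw [hτ]
          have halp : PottsProof.alp (A n) = ⨆ i : Fin n, ⨆ j : Fin n, |A n i j| := rfl
          rw [halp] at *
          rw [hc1, hc2, hc3, hc4]
          field_simp
          ring
  exact squeeze_zero' hnn hev hg
end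

section
/- Let (A_n) be a sequence of symmetric real n×n matrices satisfying the mean-field assumption, with A_n(i,i) = 0 for all i and max_{i,j∈[n]} |A_n(i,j)| → 0 as n → ∞. Let Y be a random element of {1,…,q}^n with law μ_n, and let X, X̂ and γ be as defined in the context. Then (1/n²)·E_{μ_n}[ ( Σ_{i=1}^n Σ_{r=1}^q (X_{ir} − X̂_{ir})·γ_{ir}(X) )² ] → 0 as n → ∞. -/
open Finset Filter Real

open Finset Filter Real Function

-- L1: resampling identity
lemma sum_update_eq {n q : ℕ} (i : Fin n) (F : (Fin n → Fin q) → ℝ) :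
    ∑ t : Fin q, ∑ y : Fin n → Fin q, F (Function.update y i t)
      = q * ∑ y : Fin n → Fin q, F y := by
  have he : Function.Involutive
      (fun p : Fin q × (Fin n → Fin q) => (p.2 i, Function.update p.2 i p.1)) := by
    intro p
    simp [Function.update_idem, Function.update_self, Function.update_eq_self]
  have key := Fintype.sum_bijective _ he.bijective
      (fun p : Fin q × (Fin n → Fin q) => F (Function.update p.2 i p.1))
      (fun p : Fin q × (Fin n → Fin q) => F p.2) (fun p => rfl)
  rw [Fintype.sum_prod_type, Fintype.sum_prod_type] at key
  rw [key]
  simp [Finset.sum_const, mul_comm]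

-- L2
lemma gam_xVec {n q : ℕ} (A : Matrix (Fin n) (Fin n) ℝ) (J : Matrix (Fin q) (Fin q) ℝ)
    (y : Fin n → Fin q) (i : Fin n) (r : Fin q) :
    gam A J (xVec y) i r = ∑ j, A i j * J r (y j) := by
  unfold gam xVec
  simp only [Finset.mul_sum]
  rw [Finset.sum_comm]
  refine Finset.sum_congr rfl fun j _ => ?_
  simp [mul_ite, Finset.sum_ite_eq, mul_comm]

-- L3
lemma gam_update {n q : ℕ} (A : Matrix (Fin n) (Fin n) ℝ) (J : Matrix (Fin q) (Fin q) ℝ)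
    (y : Fin n → Fin q) (i : Fin n) (t : Fin q) (j : Fin n) (r : Fin q) :
    gam A J (xVec (Function.update y i t)) j r
      = gam A J (xVec y) j r + A j i * (J r t - J r (y i)) := by
  rw [gam_xVec, gam_xVec]
  have h1 : ∀ k : Fin n, A j k * J r (Function.update y i t k) - A j k * J r (y k)
      = if k = i then A j i * (J r t - J r (y i)) else 0 := by
    intro k
    by_cases hk : k = i
    · subst hk; simp [Function.update_self]; ring
    · simp [Function.update_of_ne hk, hk]
  have h2 : ∑ k, (A j k * J r (Function.update y i t k) - A j k * J r (y k))
      = A j i * (J r t - J r (y i)) := by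
    rw [Finset.sum_congr rfl (fun k _ => h1 k)]
    simp
  rw [Finset.sum_sub_distrib] at h2
  linarith

section Props
variable {n q : ℕ} (A : Matrix (Fin n) (Fin n) ℝ) (J : Matrix (Fin q) (Fin q) ℝ)
  (h : Fin q → ℝ)

lemma denom_pos [NeZero q] (y : Fin n → Fin q) (i : Fin n) :
    0 < ∑ s, Real.exp (gam A J (xVec y) i s + h s) :=
  Finset.sum_pos (fun s _ => Real.exp_pos _) ⟨0, Finset.mem_univ 0⟩

lemma xHat_nonneg [NeZero q] (y : Fin n → Fin q) (i : Fin n) (r : Fin q) :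
    0 ≤ xHat A J h y i r :=
  div_nonneg (Real.exp_pos _).le (denom_pos A J h y i).le

set_option maxHeartbeats 1000000 in
lemma xHat_le_one [NeZero q] (y : Fin n → Fin q) (i : Fin n) (r : Fin q) :
    xHat A J h y i r ≤ 1 := by
  unfold xHat
  exact div_le_one_of_le₀
    (Finset.single_le_sum (f := fun s => Real.exp (gam A J (xVec y) i s + h s))
      (fun s _ => (Real.exp_pos _).le) (Finset.mem_univ r))
    (denom_pos A J h y i).le

lemma xHat_sum_one [NeZero q] (y : Fin n → Fin q) (i : Fin n) :
    ∑ r, xHat A J h y i r = 1 := by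
  unfold xHat
  rw [← Finset.sum_div, div_self (denom_pos A J h y i).ne']

lemma xHat_update (y : Fin n → Fin q) (i : Fin n) (hdiag : A i i = 0) (t r : Fin q) :
    xHat A J h (Function.update y i t) i r = xHat A J h y i r := by
  unfold xHat
  have : ∀ s, gam A J (xVec (Function.update y i t)) i s = gam A J (xVec y) i s := by
    intro s; rw [gam_update, hdiag]; ring
  simp only [this]

end Props

-- softmax stability
lemma softmax_close {q : ℕ} [NeZero q] (a b : Fin q → ℝ) (δ : ℝ)
    (hab : ∀ s, |a s - b s| ≤ δ) (r : Fin q) :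
    |Real.exp (a r) / ∑ s, Real.exp (a s) - Real.exp (b r) / ∑ s, Real.exp (b s)|
      ≤ Real.exp (2 * δ) - 1 := by
  have hδ : 0 ≤ δ := le_trans (abs_nonneg _) (hab 0)
  have Sa : 0 < ∑ s, Real.exp (a s) := Finset.sum_pos (fun s _ => Real.exp_pos _) ⟨0, Finset.mem_univ 0⟩
  have Sb : 0 < ∑ s, Real.exp (b s) := Finset.sum_pos (fun s _ => Real.exp_pos _) ⟨0, Finset.mem_univ 0⟩
  have key : ∀ u v : Fin q → ℝ, (∀ s, |u s - v s| ≤ δ) →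
      Real.exp (u r) / ∑ s, Real.exp (u s)
        ≤ Real.exp (2 * δ) * (Real.exp (v r) / ∑ s, Real.exp (v s)) := by
    intro u v huv
    have Su : 0 < ∑ s, Real.exp (u s) := Finset.sum_pos (fun s _ => Real.exp_pos _) ⟨0, Finset.mem_univ 0⟩
    have Sv : 0 < ∑ s, Real.exp (v s) := Finset.sum_pos (fun s _ => Real.exp_pos _) ⟨0, Finset.mem_univ 0⟩
    have h1 : Real.exp (u r) ≤ Real.exp δ * Real.exp (v r) := by
      rw [← Real.exp_add]
      apply Real.exp_le_exp.2
      have := (abs_le.1 (huv r)).2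
      linarith
    have h2 : Real.exp (-δ) * ∑ s, Real.exp (v s) ≤ ∑ s, Real.exp (u s) := by
      rw [Finset.mul_sum]
      apply Finset.sum_le_sum
      intro s _
      rw [← Real.exp_add]
      apply Real.exp_le_exp.2
      have := (abs_le.1 (huv s)).1
      linarith
    calc Real.exp (u r) / ∑ s, Real.exp (u s)
        ≤ (Real.exp δ * Real.exp (v r)) / (Real.exp (-δ) * ∑ s, Real.exp (v s)) := by
          apply div_le_div₀ (by positivity) h1 (by positivity) h2
      _ = Real.exp (2 * δ) * (Real.exp (v r) / ∑ s, Real.exp (v s)) := by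
          rw [← div_mul_div_comm, ← Real.exp_sub]
          ring_nf
  have σa1 : Real.exp (a r) / ∑ s, Real.exp (a s) ≤ 1 := by
    rw [div_le_one Sa]
    exact Finset.single_le_sum (fun s _ => (Real.exp_pos _).le) (Finset.mem_univ r)
  have σb1 : Real.exp (b r) / ∑ s, Real.exp (b s) ≤ 1 := by
    rw [div_le_one Sb]
    exact Finset.single_le_sum (fun s _ => (Real.exp_pos _).le) (Finset.mem_univ r)
  have σa0 : 0 ≤ Real.exp (a r) / ∑ s, Real.exp (a s) := by positivity
  have σb0 : 0 ≤ Real.exp (b r) / ∑ s, Real.exp (b s) := by positivity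
  have hba : ∀ s, |b s - a s| ≤ δ := fun s => by rw [abs_sub_comm]; exact hab s
  have k1 := key a b hab
  have k2 := key b a hba
  rw [abs_le]
  constructor <;> nlinarith [Real.one_le_exp (by linarith : (0:ℝ) ≤ 2*δ)]

-- e^x - 1 ≤ x e^x for x ≥ 0
lemma exp_sub_one_le {x : ℝ} (hx : 0 ≤ x) : Real.exp x - 1 ≤ x * Real.exp x := by
  have h1 : 1 - x ≤ Real.exp (-x) := by
    have := Real.add_one_le_exp (-x); linarith
  have h2 : (1 - x) * Real.exp x ≤ Real.exp (-x) * Real.exp x :=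
    mul_le_mul_of_nonneg_right h1 (Real.exp_pos x).le
  rw [← Real.exp_add, neg_add_cancel, Real.exp_zero] at h2
  nlinarith

lemma sum_sum_split {n : ℕ} (i : Fin n) (F : Fin n → Fin n → ℝ) :
    ∑ a, ∑ b, F a b
      = F i i + ∑ b ∈ Finset.univ.erase i, F i b + ∑ a ∈ Finset.univ.erase i, F a i
        + ∑ a ∈ Finset.univ.erase i, ∑ b ∈ Finset.univ.erase i, F a b := by
  rw [← Finset.add_sum_erase Finset.univ (fun a => ∑ b, F a b) (Finset.mem_univ i),
      ← Finset.add_sum_erase Finset.univ (fun b => F i b) (Finset.mem_univ i)]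
  have : ∀ a ∈ Finset.univ.erase i, ∑ b, F a b
      = F a i + ∑ b ∈ Finset.univ.erase i, F a b := fun a _ =>
    (Finset.add_sum_erase Finset.univ (fun b => F a b) (Finset.mem_univ i)).symm
  rw [Finset.sum_congr rfl this, Finset.sum_add_distrib]
  ring

lemma pottsH_update {n q : ℕ} (A : Matrix (Fin n) (Fin n) ℝ) (J : Matrix (Fin q) (Fin q) ℝ)
    (h : Fin q → ℝ) (hA : A.IsSymm) (hJ : J.IsSymm)
    (y : Fin n → Fin q) (i : Fin n) (hd : A i i = 0) (t : Fin q) :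
    pottsH A J h (Function.update y i t)
      = ((∑ j, A i j * J t (y j)) + h t)
        + ((1/2) * (∑ a ∈ Finset.univ.erase i, ∑ b ∈ Finset.univ.erase i,
              A a b * J (y a) (y b))
           + ∑ a ∈ Finset.univ.erase i, h (y a)) := by
  unfold pottsH
  set y' := Function.update y i t with hy'
  have hyi : y' i = t := Function.update_self i t y
  have hyk : ∀ k ∈ Finset.univ.erase i, y' k = y k := fun k hk =>
    Function.update_of_ne (Finset.mem_erase.1 hk).1 t y
  rw [sum_sum_split i (fun a b => A a b * J (y' a) (y' b))]
  have e1 : A i i * J (y' i) (y' i) = 0 := by rw [hd]; ring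
  have e2 : ∑ b ∈ Finset.univ.erase i, A i b * J (y' i) (y' b)
      = ∑ j, A i j * J t (y j) := by
    rw [← Finset.add_sum_erase Finset.univ (fun j => A i j * J t (y j)) (Finset.mem_univ i),
        hd]
    rw [Finset.sum_congr rfl (fun b hb => by rw [hyi, hyk b hb])]
    ring
  have e3 : ∑ a ∈ Finset.univ.erase i, A a i * J (y' a) (y' i)
      = ∑ j, A i j * J t (y j) := by
    rw [← e2]
    refine Finset.sum_congr rfl fun a ha => ?_
    rw [hA.apply, hJ.apply]
  have e4 : ∑ a ∈ Finset.univ.erase i, ∑ b ∈ Finset.univ.erase i, A a b * J (y' a) (y' b)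
      = ∑ a ∈ Finset.univ.erase i, ∑ b ∈ Finset.univ.erase i, A a b * J (y a) (y b) := by
    refine Finset.sum_congr rfl fun a ha => Finset.sum_congr rfl fun b hb => ?_
    rw [hyk a ha, hyk b hb]
  have e5 : ∑ a, h (y' a) = h t + ∑ a ∈ Finset.univ.erase i, h (y a) := by
    rw [← Finset.add_sum_erase Finset.univ (fun a => h (y' a)) (Finset.mem_univ i), hyi]
    rw [Finset.sum_congr rfl (fun a ha => by rw [hyk a ha])]
  rw [e1, e2, e3, e4, e5]
  ring

lemma key_zero {n q : ℕ} [NeZero q] (A : Matrix (Fin n) (Fin n) ℝ)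
    (J : Matrix (Fin q) (Fin q) ℝ) (h : Fin q → ℝ) (hA : A.IsSymm) (hJ : J.IsSymm)
    (i : Fin n) (hd : A i i = 0) (r : Fin q) (Ψ : (Fin n → Fin q) → ℝ)
    (hΨ : ∀ y t, Ψ (Function.update y i t) = Ψ y) :
    ∑ y : Fin n → Fin q,
      pottsWeight A J h y * ((xVec y i r - xHat A J h y i r) * Ψ y) = 0 := by
  have hq0 : (q : ℝ) ≠ 0 := Nat.cast_ne_zero.2 (NeZero.ne q)
  have hZ : (0:ℝ) < ∑ y' : Fin n → Fin q, Real.exp (pottsH A J h y') :=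
    Finset.sum_pos (fun y' _ => Real.exp_pos _) Finset.univ_nonempty
  set N := ∑ y : Fin n → Fin q,
      Real.exp (pottsH A J h y) * ((xVec y i r - xHat A J h y i r) * Ψ y) with hN
  have hmain : N = 0 := by
    have hres := sum_update_eq i (fun y =>
      Real.exp (pottsH A J h y) * ((xVec y i r - xHat A J h y i r) * Ψ y))
    rw [Finset.sum_comm] at hres
    have hzero : ∀ y : Fin n → Fin q, ∑ t : Fin q,
        Real.exp (pottsH A J h (Function.update y i t)) *
          ((xVec (Function.update y i t) i r
            - xHat A J h (Function.update y i t) i r) * Ψ (Function.update y i t)) = 0 := by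
      intro y
      set G : Fin q → ℝ := fun s => (∑ j, A i j * J s (y j)) + h s with hG
      set Rest : ℝ := (1/2) * (∑ a ∈ Finset.univ.erase i, ∑ b ∈ Finset.univ.erase i,
            A a b * J (y a) (y b)) + ∑ a ∈ Finset.univ.erase i, h (y a) with hRest
      have hSpos : (0:ℝ) < ∑ s, Real.exp (G s) :=
        Finset.sum_pos (fun s _ => Real.exp_pos _) Finset.univ_nonempty
      have hxh : xHat A J h y i r = Real.exp (G r) / ∑ s, Real.exp (G s) := by
        unfold xHat
        simp only [gam_xVec, hG]
      have hterm : ∀ t : Fin q,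
          Real.exp (pottsH A J h (Function.update y i t)) *
            ((xVec (Function.update y i t) i r
              - xHat A J h (Function.update y i t) i r) * Ψ (Function.update y i t))
          = (Real.exp Rest * Ψ y) *
              (Real.exp (G t) * ((if t = r then 1 else 0)
                - Real.exp (G r) / ∑ s, Real.exp (G s))) := by
        intro t
        rw [pottsH_update A J h hA hJ y i hd t, xHat_update A J h y i hd t r, hΨ, hxh]
        have hx : xVec (Function.update y i t) i r = if t = r then 1 else 0 := by
          simp [xVec, Function.update_self]
        rw [hx, Real.exp_add]
        simp only [hG, hRest]
        ring_nf
      rw [Finset.sum_congr rfl (fun t _ => hterm t), ← Finset.mul_sum]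
      have : ∑ t : Fin q, Real.exp (G t) * ((if t = r then 1 else 0)
          - Real.exp (G r) / ∑ s, Real.exp (G s)) = 0 := by
        have expand : ∀ t : Fin q, Real.exp (G t) * ((if t = r then 1 else 0)
            - Real.exp (G r) / ∑ s, Real.exp (G s))
            = (if t = r then Real.exp (G t) else 0)
              - Real.exp (G t) * (Real.exp (G r) / ∑ s, Real.exp (G s)) := by
          intro t; by_cases ht : t = r <;> simp [ht] <;> ring
        rw [Finset.sum_congr rfl (fun t _ => expand t), Finset.sum_sub_distrib,
          Finset.sum_ite_eq' Finset.univ r (fun t => Real.exp (G t)), ← Finset.sum_mul]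
        simp only [Finset.mem_univ, if_true]
        rw [mul_div_assoc', mul_comm, mul_div_assoc, div_self hSpos.ne', mul_one]
        ring
      rw [this, mul_zero]
    rw [Finset.sum_congr rfl (fun y _ => hzero y), Finset.sum_const_zero] at hres
    exact (mul_eq_zero.1 hres.symm).resolve_left hq0
  have : ∀ y : Fin n → Fin q,
      pottsWeight A J h y * ((xVec y i r - xHat A J h y i r) * Ψ y)
      = (Real.exp (pottsH A J h y) * ((xVec y i r - xHat A J h y i r) * Ψ y))
          * (∑ y' : Fin n → Fin q, Real.exp (pottsH A J h y'))⁻¹ := by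
    intro y; unfold pottsWeight; rw [div_mul_eq_mul_div, div_eq_mul_inv]
  rw [Finset.sum_congr rfl (fun y _ => this y), ← Finset.sum_mul, ← hN, hmain, zero_mul]

noncomputable def fI {n q : ℕ} (A : Matrix (Fin n) (Fin n) ℝ) (J : Matrix (Fin q) (Fin q) ℝ)
    (h : Fin q → ℝ) (y : Fin n → Fin q) (i : Fin n) : ℝ :=
  ∑ r, (xVec y i r - xHat A J h y i r) * gam A J (xVec y) i r

noncomputable def Tf {n q : ℕ} (A : Matrix (Fin n) (Fin n) ℝ) (J : Matrix (Fin q) (Fin q) ℝ)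
    (h : Fin q → ℝ) (y : Fin n → Fin q) : ℝ :=
  ∑ i, fI A J h y i

noncomputable def gv {n q : ℕ} (A : Matrix (Fin n) (Fin n) ℝ) (J : Matrix (Fin q) (Fin q) ℝ)
    (y : Fin n → Fin q) (i : Fin n) : ℝ :=
  ∑ r, |gam A J (xVec y) i r|

section PW
variable {n q : ℕ} [NeZero q] (A : Matrix (Fin n) (Fin n) ℝ) (J : Matrix (Fin q) (Fin q) ℝ)
  (h : Fin q → ℝ)

lemma gv_nonneg (y : Fin n → Fin q) (i : Fin n) : 0 ≤ gv A J y i :=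
  Finset.sum_nonneg fun r _ => abs_nonneg _

lemma abs_gam_le_gv (y : Fin n → Fin q) (i : Fin n) (r : Fin q) :
    |gam A J (xVec y) i r| ≤ gv A J y i :=
  Finset.single_le_sum (f := fun r => |gam A J (xVec y) i r|)
    (fun r _ => abs_nonneg _) (Finset.mem_univ r)

lemma xdiff_le (y : Fin n → Fin q) (i : Fin n) (r : Fin q) :
    |xVec y i r - xHat A J h y i r| ≤ 1 := by
  have h1 := xHat_nonneg A J h y i r
  have h2 := xHat_le_one A J h y i r
  rw [abs_le, xVec]
  by_cases hy : y i = r <;> simp [hy] <;> constructor <;> linarith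

lemma abs_fI_le_gv (y : Fin n → Fin q) (i : Fin n) : |fI A J h y i| ≤ gv A J y i := by
  refine le_trans (Finset.abs_sum_le_sum_abs _ _) ?_
  unfold gv
  refine Finset.sum_le_sum fun r _ => ?_
  rw [abs_mul]
  exact mul_le_of_le_one_left (abs_nonneg _) (xdiff_le A J h y i r)

lemma sum_gv_le (C : ℝ)
    (hC : ∀ x : Fin n → ℝ, (∀ j, x j ∈ Set.Icc (0:ℝ) 1) → ∑ i, |∑ j, A i j * x j| ≤ C * n)
    (y : Fin n → Fin q) :
    ∑ i, gv A J y i ≤ (∑ r, ∑ s, |J r s|) * (C * n) := by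
  have step1 : ∀ i, gv A J y i ≤ ∑ r, ∑ s, |J r s| * |∑ j, A i j * xVec y j s| := by
    intro i
    refine Finset.sum_le_sum fun r _ => ?_
    refine le_trans (Finset.abs_sum_le_sum_abs _ _) ?_
    refine Finset.sum_le_sum fun s _ => ?_
    rw [abs_mul]
  refine le_trans (Finset.sum_le_sum fun i _ => step1 i) ?_
  rw [Finset.sum_comm]
  rw [Finset.sum_mul]
  refine Finset.sum_le_sum fun r _ => ?_
  rw [Finset.sum_comm, Finset.sum_mul]
  refine Finset.sum_le_sum fun s _ => ?_
  rw [← Finset.mul_sum]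
  refine mul_le_mul_of_nonneg_left ?_ (abs_nonneg _)
  exact hC (fun j => xVec y j s) (fun j => by unfold xVec; by_cases hy : y j = s <;> simp [hy])

lemma sum_gv_sq_le (y : Fin n → Fin q) (Jb : ℝ) (hJrs : ∀ r s, |J r s| ≤ Jb) :
    ∑ i, (gv A J y i) ^ 2 ≤ q^2 * Jb^2 * n * (∑ i, ∑ j, (A i j)^2) := by
  have hJb0 : 0 ≤ Jb := le_trans (abs_nonneg _) (hJrs 0 0)
  have step1 : ∀ i, (gv A J y i)^2 ≤ q * ∑ r, (gam A J (xVec y) i r)^2 := by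
    intro i
    have := Finset.sum_mul_sq_le_sq_mul_sq Finset.univ (fun _ : Fin q => (1:ℝ))
      (fun r => |gam A J (xVec y) i r|)
    simp only [one_mul, one_pow, Finset.sum_const, Finset.card_univ, Fintype.card_fin,
      nsmul_eq_mul, mul_one, sq_abs] at this
    unfold gv
    exact this
  have step2 : ∀ i r, (gam A J (xVec y) i r)^2 ≤ (∑ j, (A i j)^2) * (n * Jb^2) := by
    intro i r
    rw [gam_xVec]
    refine le_trans (Finset.sum_mul_sq_le_sq_mul_sq Finset.univ (fun j => A i j)
      (fun j => J r (y j))) ?_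
    refine mul_le_mul_of_nonneg_left ?_ (Finset.sum_nonneg fun j _ => sq_nonneg _)
    calc ∑ j, (J r (y j))^2 ≤ ∑ _j : Fin n, Jb^2 := by
          refine Finset.sum_le_sum fun j _ => ?_
          rw [← sq_abs]
          exact pow_le_pow_left₀ (abs_nonneg _) (hJrs r (y j)) 2
      _ = n * Jb^2 := by simp [Finset.sum_const, nsmul_eq_mul]
  calc ∑ i, (gv A J y i)^2 ≤ ∑ i, (q:ℝ) * ∑ r, (gam A J (xVec y) i r)^2 :=
        Finset.sum_le_sum fun i _ => step1 i
    _ ≤ ∑ i, (q:ℝ) * ∑ _r : Fin q, ((∑ j, (A i j)^2) * (n * Jb^2)) := by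
        refine Finset.sum_le_sum fun i _ => mul_le_mul_of_nonneg_left
          (Finset.sum_le_sum fun r _ => step2 i r) (Nat.cast_nonneg q)
    _ = q^2 * Jb^2 * n * (∑ i, ∑ j, (A i j)^2) := by
        rw [Finset.mul_sum]
        refine Finset.sum_congr rfl fun i _ => ?_
        simp only [Finset.sum_const, Finset.card_univ, Fintype.card_fin, nsmul_eq_mul]
        ring

end PW

noncomputable def K1c (Jb : ℝ) : ℝ := 4*Jb*Real.exp (4*Jb)
noncomputable def K2c (q : ℕ) (Jb : ℝ) : ℝ := 2*q*Jb + 2*q*Jb*(K1c Jb) + K1c Jb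

section LIP
variable {n q : ℕ} [NeZero q] (A : Matrix (Fin n) (Fin n) ℝ) (J : Matrix (Fin q) (Fin q) ℝ)
  (h : Fin q → ℝ)

lemma fI_update_self (y : Fin n → Fin q) (i : Fin n) (hd : A i i = 0) (s : Fin q) :
    |fI A J h y i - fI A J h (Function.update y i s) i| ≤ gv A J y i := by
  have hg : ∀ r, gam A J (xVec (Function.update y i s)) i r = gam A J (xVec y) i r := by
    intro r; rw [gam_update, hd]; ring
  have key : fI A J h y i - fI A J h (Function.update y i s) i
      = ∑ r, (xVec y i r - xVec (Function.update y i s) i r) * gam A J (xVec y) i r := by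
    unfold fI
    rw [← Finset.sum_sub_distrib]
    refine Finset.sum_congr rfl fun r _ => ?_
    rw [hg, xHat_update A J h y i hd s r]
    ring
  rw [key]
  refine le_trans (Finset.abs_sum_le_sum_abs _ _) ?_
  unfold gv
  refine Finset.sum_le_sum fun r _ => ?_
  rw [abs_mul]
  refine mul_le_of_le_one_left (abs_nonneg _) ?_
  unfold xVec
  simp only [Function.update_self]
  split_ifs <;> norm_num

lemma fI_update_other (hA : A.IsSymm) (y : Fin n → Fin q) (i j : Fin n) (hji : j ≠ i)
    (s : Fin q) (Jb : ℝ) (hJrs : ∀ r t, |J r t| ≤ Jb) (hA1 : |A i j| ≤ 1) :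
    |fI A J h y j - fI A J h (Function.update y i s) j|
      ≤ K2c q Jb * |A i j| * (1 + gv A J y j) := by
  have hJb0 : 0 ≤ Jb := le_trans (abs_nonneg _) (hJrs 0 0)
  have hK10 : 0 ≤ K1c Jb := by unfold K1c; positivity
  set y' := Function.update y i s with hy'
  have hAji : A j i = A i j := hA.apply i j
  have hdg : ∀ r, |gam A J (xVec y') j r - gam A J (xVec y) j r| ≤ 2*Jb*|A i j| := by
    intro r
    rw [gam_update]
    have : gam A J (xVec y) j r + A j i * (J r s - J r (y i)) - gam A J (xVec y) j r
        = A j i * (J r s - J r (y i)) := by ring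
    rw [this, abs_mul, hAji]
    calc |A i j| * |J r s - J r (y i)| ≤ |A i j| * (2*Jb) := by
          refine mul_le_mul_of_nonneg_left ?_ (abs_nonneg _)
          refine le_trans (abs_sub _ _) ?_
          have := hJrs r s; have := hJrs r (y i); linarith
      _ = 2*Jb*|A i j| := by ring
  have hdx : ∀ r, |xHat A J h y j r - xHat A J h y' j r| ≤ K1c Jb * |A i j| := by
    intro r
    have hab : ∀ t, |(gam A J (xVec y) j t + h t) - (gam A J (xVec y') j t + h t)|
        ≤ 2*Jb*|A i j| := by
      intro t
      have : (gam A J (xVec y) j t + h t) - (gam A J (xVec y') j t + h t)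
          = -(gam A J (xVec y') j t - gam A J (xVec y) j t) := by ring
      rw [this, abs_neg]
      exact hdg t
    have hsc := softmax_close (fun t => gam A J (xVec y) j t + h t)
      (fun t => gam A J (xVec y') j t + h t) (2*Jb*|A i j|) hab r
    have step : Real.exp (2*(2*Jb*|A i j|)) - 1 ≤ K1c Jb * |A i j| := by
      have hδ0 : 0 ≤ 2*(2*Jb*|A i j|) := by positivity
      refine le_trans (exp_sub_one_le hδ0) ?_
      have hle : 2*(2*Jb*|A i j|) ≤ 4*Jb := by nlinarith [abs_nonneg (A i j)]
      have hexp : Real.exp (2*(2*Jb*|A i j|)) ≤ Real.exp (4*Jb) := Real.exp_le_exp.2 hle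
      unfold K1c
      nlinarith [Real.exp_pos (2*(2*Jb*|A i j|)), abs_nonneg (A i j)]
    exact le_trans (le_trans (by exact hsc) step) (le_refl _)
  have hxv : ∀ r, xVec y' j r = xVec y j r := by
    intro r; unfold xVec; rw [hy', Function.update_of_ne hji]
  have hgv' : ∀ r, |gam A J (xVec y') j r| ≤ |gam A J (xVec y) j r| + 2*Jb*|A i j| := by
    intro r
    calc |gam A J (xVec y') j r|
        = |gam A J (xVec y) j r + (gam A J (xVec y') j r - gam A J (xVec y) j r)| := by
          ring_nf
      _ ≤ |gam A J (xVec y) j r| + |gam A J (xVec y') j r - gam A J (xVec y) j r| :=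
          abs_add_le _ _
      _ ≤ |gam A J (xVec y) j r| + 2*Jb*|A i j| := by have := hdg r; linarith
  have main : |fI A J h y j - fI A J h y' j|
      ≤ ∑ r, (2*Jb*|A i j| + K1c Jb * |A i j| * |gam A J (xVec y') j r|) := by
    unfold fI
    rw [← Finset.sum_sub_distrib]
    refine le_trans (Finset.abs_sum_le_sum_abs _ _) (Finset.sum_le_sum fun r _ => ?_)
    have hsplit : (xVec y j r - xHat A J h y j r) * gam A J (xVec y) j r
        - (xVec y' j r - xHat A J h y' j r) * gam A J (xVec y') j r
        = (xVec y j r - xHat A J h y j r) * (gam A J (xVec y) j r - gam A J (xVec y') j r)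
          + (xHat A J h y' j r - xHat A J h y j r) * gam A J (xVec y') j r := by
      rw [hxv r]; ring
    rw [hsplit]
    refine le_trans (abs_add_le _ _) ?_
    rw [abs_mul, abs_mul]
    have b1 : |xVec y j r - xHat A J h y j r| ≤ 1 := xdiff_le A J h y j r
    have b2 : |gam A J (xVec y) j r - gam A J (xVec y') j r| ≤ 2*Jb*|A i j| := by
      rw [abs_sub_comm]; exact hdg r
    have b3 : |xHat A J h y' j r - xHat A J h y j r| ≤ K1c Jb * |A i j| := by
      rw [abs_sub_comm]; exact hdx r
    have g0 : (0:ℝ) ≤ |gam A J (xVec y') j r| := abs_nonneg _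
    nlinarith [abs_nonneg (xVec y j r - xHat A J h y j r),
      abs_nonneg (gam A J (xVec y) j r - gam A J (xVec y') j r), abs_nonneg (A i j)]
  have sum2 : ∑ r, |gam A J (xVec y') j r| ≤ gv A J y j + q * (2*Jb*|A i j|) := by
    unfold gv
    calc ∑ r, |gam A J (xVec y') j r|
        ≤ ∑ r, (|gam A J (xVec y) j r| + 2*Jb*|A i j|) := Finset.sum_le_sum fun r _ => hgv' r
      _ = (∑ r, |gam A J (xVec y) j r|) + q * (2*Jb*|A i j|) := by
          rw [Finset.sum_add_distrib]
          simp [Finset.sum_const, Finset.card_univ, nsmul_eq_mul]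
  refine le_trans main ?_
  rw [Finset.sum_add_distrib, Finset.sum_const, ← Finset.mul_sum]
  simp only [Finset.card_univ, Fintype.card_fin, nsmul_eq_mul]
  have hgv0 : 0 ≤ gv A J y j := gv_nonneg A J y j
  have hq0 : (0:ℝ) ≤ q := Nat.cast_nonneg q
  have e1 : K1c Jb * |A i j| * (∑ r, |gam A J (xVec y') j r|)
      ≤ K1c Jb * |A i j| * (gv A J y j + q * (2*Jb*|A i j|)) :=
    mul_le_mul_of_nonneg_left sum2 (mul_nonneg hK10 (abs_nonneg _))
  have ht2 : |A i j| * |A i j| ≤ |A i j| := by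
    nlinarith [abs_nonneg (A i j)]
  have m1 : 0 ≤ (q:ℝ) * Jb * |A i j| * gv A J y j := by positivity
  have m2 : 0 ≤ (q:ℝ) * Jb * K1c Jb * |A i j| * gv A J y j := by positivity
  have m3 : 0 ≤ K1c Jb * |A i j| := by positivity
  have m4 : 0 ≤ (q:ℝ) * Jb * K1c Jb * (|A i j| - |A i j| * |A i j|) := by
    have := sub_nonneg.2 ht2
    positivity
  unfold K2c
  nlinarith [e1, m1, m2, m3, m4]

end LIP

section CORE
variable {n q : ℕ} [NeZero q] (A : Matrix (Fin n) (Fin n) ℝ) (J : Matrix (Fin q) (Fin q) ℝ)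
  (h : Fin q → ℝ)

lemma pottsWeight_nonneg (y : Fin n → Fin q) : 0 ≤ pottsWeight A J h y := by
  unfold pottsWeight
  have : (0:ℝ) < ∑ y' : Fin n → Fin q, Real.exp (pottsH A J h y') :=
    Finset.sum_pos (fun y' _ => Real.exp_pos _) Finset.univ_nonempty
  positivity

lemma pottsWeight_sum_one : ∑ y : Fin n → Fin q, pottsWeight A J h y = 1 := by
  unfold pottsWeight
  rw [← Finset.sum_div]
  exact div_self (Finset.sum_pos (fun y' _ => Real.exp_pos _) Finset.univ_nonempty).ne'

noncomputable def Ti {n q : ℕ} (A : Matrix (Fin n) (Fin n) ℝ) (J : Matrix (Fin q) (Fin q) ℝ)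
    (h : Fin q → ℝ) (y : Fin n → Fin q) (i : Fin n) : ℝ :=
  ∑ s, xHat A J h y i s * Tf A J h (Function.update y i s)

lemma exp_fI_Ti_zero (hA : A.IsSymm) (hJ : J.IsSymm) (i : Fin n) (hd : A i i = 0) :
    ∑ y : Fin n → Fin q, pottsWeight A J h y * (fI A J h y i * Ti A J h y i) = 0 := by
  have rearrange : ∀ y : Fin n → Fin q,
      pottsWeight A J h y * (fI A J h y i * Ti A J h y i)
      = ∑ r, pottsWeight A J h y * ((xVec y i r - xHat A J h y i r) *
          (gam A J (xVec y) i r * Ti A J h y i)) := by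
    intro y
    unfold fI
    rw [Finset.sum_mul, Finset.mul_sum]
    exact Finset.sum_congr rfl fun r _ => by ring
  rw [Finset.sum_congr rfl (fun y _ => rearrange y), Finset.sum_comm]
  refine Finset.sum_eq_zero fun r _ => ?_
  refine key_zero A J h hA hJ i hd r (fun y => gam A J (xVec y) i r * Ti A J h y i) ?_
  intro y t
  have h1 : gam A J (xVec (Function.update y i t)) i r = gam A J (xVec y) i r := by
    rw [gam_update, hd]; ring
  have h2 : Ti A J h (Function.update y i t) i = Ti A J h y i := by
    unfold Ti
    refine Finset.sum_congr rfl fun s _ => ?_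
    rw [xHat_update A J h y i hd t s, Function.update_idem]
  simp only [h1, h2]

lemma exp_sq_eq (hA : A.IsSymm) (hJ : J.IsSymm) (hd : ∀ i, A i i = 0) :
    ∑ y : Fin n → Fin q, pottsWeight A J h y * (Tf A J h y)^2
      = ∑ i, ∑ y : Fin n → Fin q,
          pottsWeight A J h y * (fI A J h y i * (Tf A J h y - Ti A J h y i)) := by
  have step1 : ∑ y : Fin n → Fin q, pottsWeight A J h y * (Tf A J h y)^2
      = ∑ i, ∑ y : Fin n → Fin q, pottsWeight A J h y * (fI A J h y i * Tf A J h y) := by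
    rw [Finset.sum_comm]
    refine Finset.sum_congr rfl fun y _ => ?_
    rw [← Finset.mul_sum, ← Finset.sum_mul]
    rw [show ∑ i, fI A J h y i = Tf A J h y from rfl]
    ring
  rw [step1]
  refine Finset.sum_congr rfl fun i _ => ?_
  have := exp_fI_Ti_zero A J h hA hJ i (hd i)
  rw [show (∑ y : Fin n → Fin q, pottsWeight A J h y *
      (fI A J h y i * (Tf A J h y - Ti A J h y i)))
    = (∑ y : Fin n → Fin q, pottsWeight A J h y * (fI A J h y i * Tf A J h y))
      - ∑ y : Fin n → Fin q, pottsWeight A J h y * (fI A J h y i * Ti A J h y i) by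
      rw [← Finset.sum_sub_distrib]; exact Finset.sum_congr rfl fun y _ => by ring]
  rw [this, sub_zero]

lemma Tf_update_diff (hA : A.IsSymm) (hd : ∀ i, A i i = 0) (Jb : ℝ)
    (hJrs : ∀ r t, |J r t| ≤ Jb) (hA1 : ∀ i j, |A i j| ≤ 1)
    (y : Fin n → Fin q) (i : Fin n) (s : Fin q) :
    |Tf A J h y - Tf A J h (Function.update y i s)|
      ≤ gv A J y i + ∑ j, K2c q Jb * |A i j| * (1 + gv A J y j) := by
  have hJb0 : 0 ≤ Jb := le_trans (abs_nonneg _) (hJrs 0 0)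
  have hK20 : 0 ≤ K2c q Jb := by unfold K2c K1c; positivity
  have hdiff : Tf A J h y - Tf A J h (Function.update y i s)
      = ∑ j, (fI A J h y j - fI A J h (Function.update y i s) j) := by
    unfold Tf; rw [← Finset.sum_sub_distrib]
  rw [hdiff]
  refine le_trans (Finset.abs_sum_le_sum_abs _ _) ?_
  have hbound : ∀ j, |fI A J h y j - fI A J h (Function.update y i s) j|
      ≤ if j = i then gv A J y i else K2c q Jb * |A i j| * (1 + gv A J y j) := by
    intro j
    by_cases hj : j = i
    · subst hj; rw [if_pos rfl]; exact fI_update_self A J h y j (hd j) s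
    · rw [if_neg hj]; exact fI_update_other A J h hA y i j hj s Jb hJrs (hA1 i j)
  refine le_trans (Finset.sum_le_sum fun j _ => hbound j) ?_
  rw [← Finset.add_sum_erase Finset.univ _ (Finset.mem_univ i), if_pos rfl]
  gcongr
  calc ∑ j ∈ Finset.univ.erase i,
        (if j = i then gv A J y i else K2c q Jb * |A i j| * (1 + gv A J y j))
      = ∑ j ∈ Finset.univ.erase i, K2c q Jb * |A i j| * (1 + gv A J y j) := by
        refine Finset.sum_congr rfl fun j hj => ?_
        rw [if_neg (Finset.mem_erase.1 hj).1]
    _ ≤ ∑ j, K2c q Jb * |A i j| * (1 + gv A J y j) := by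
        refine Finset.sum_le_sum_of_subset_of_nonneg (Finset.erase_subset _ _) ?_
        intro j _ _
        have := gv_nonneg A J y j
        positivity

lemma Tf_sub_Ti (hA : A.IsSymm) (hd : ∀ i, A i i = 0) (Jb : ℝ)
    (hJrs : ∀ r t, |J r t| ≤ Jb) (hA1 : ∀ i j, |A i j| ≤ 1)
    (y : Fin n → Fin q) (i : Fin n) :
    |Tf A J h y - Ti A J h y i|
      ≤ gv A J y i + ∑ j, K2c q Jb * |A i j| * (1 + gv A J y j) := by
  set B := gv A J y i + ∑ j, K2c q Jb * |A i j| * (1 + gv A J y j) with hB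
  have hkey : Tf A J h y - Ti A J h y i
      = ∑ s, xHat A J h y i s * (Tf A J h y - Tf A J h (Function.update y i s)) := by
    unfold Ti
    rw [show ∑ s, xHat A J h y i s * (Tf A J h y - Tf A J h (Function.update y i s))
        = (∑ s, xHat A J h y i s) * Tf A J h y
          - ∑ s, xHat A J h y i s * Tf A J h (Function.update y i s) by
      rw [Finset.sum_mul, ← Finset.sum_sub_distrib]
      exact Finset.sum_congr rfl fun s _ => by ring]
    rw [xHat_sum_one, one_mul]
  rw [hkey]
  refine le_trans (Finset.abs_sum_le_sum_abs _ _) ?_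
  calc ∑ s, |xHat A J h y i s * (Tf A J h y - Tf A J h (Function.update y i s))|
      ≤ ∑ s, xHat A J h y i s * B := by
        refine Finset.sum_le_sum fun s _ => ?_
        rw [abs_mul, abs_of_nonneg (xHat_nonneg A J h y i s)]
        exact mul_le_mul_of_nonneg_left
          (Tf_update_diff A J h hA hd Jb hJrs hA1 y i s) (xHat_nonneg A J h y i s)
    _ = B := by rw [← Finset.sum_mul, xHat_sum_one, one_mul]

end CORE

lemma core_bound {n q : ℕ} [NeZero q] (A : Matrix (Fin n) (Fin n) ℝ)
    (J : Matrix (Fin q) (Fin q) ℝ) (h : Fin q → ℝ)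
    (hA : A.IsSymm) (hJ : J.IsSymm) (hd : ∀ i, A i i = 0)
    (Jb C εA : ℝ) (hJrs : ∀ r t, |J r t| ≤ Jb)
    (hgv : ∀ y : Fin n → Fin q, ∑ i, gv A J y i ≤ Jb * (C * n))
    (hε : ∀ i j, |A i j| ≤ εA) (hε0 : 0 ≤ εA) (hε1 : εA ≤ 1) :
    ∑ y : Fin n → Fin q, pottsWeight A J h y * (Tf A J h y)^2
      ≤ q^2 * Jb^2 * n * (∑ i, ∑ j, (A i j)^2)
        + K2c q Jb * εA * ((Jb*(C*n)) * (n + Jb*(C*n))) := by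
  have hJb0 : 0 ≤ Jb := le_trans (abs_nonneg _) (hJrs 0 0)
  have hK20 : 0 ≤ K2c q Jb := by unfold K2c K1c; positivity
  have hA1 : ∀ i j, |A i j| ≤ 1 := fun i j => le_trans (hε i j) hε1
  set B : (Fin n → Fin q) → Fin n → ℝ :=
    fun y i => gv A J y i + ∑ j, K2c q Jb * |A i j| * (1 + gv A J y j) with hB
  have hB0 : ∀ (y : Fin n → Fin q) i, 0 ≤ B y i := by
    intro y i
    have h1 := gv_nonneg A J y i
    have h2 : 0 ≤ ∑ j, K2c q Jb * |A i j| * (1 + gv A J y j) :=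
      Finset.sum_nonneg fun j _ => by
        have := gv_nonneg A J y j; positivity
    simp only [hB]; linarith
  have pointwise : ∀ y : Fin n → Fin q, ∑ i, gv A J y i * B y i
      ≤ q^2 * Jb^2 * n * (∑ i, ∑ j, (A i j)^2)
        + K2c q Jb * εA * ((Jb*(C*n)) * (n + Jb*(C*n))) := by
    intro y
    have expand : ∑ i, gv A J y i * B y i
        = (∑ i, (gv A J y i)^2)
          + ∑ i, ∑ j, gv A J y i * (K2c q Jb * |A i j| * (1 + gv A J y j)) := by
      simp only [hB]
      rw [← Finset.sum_add_distrib]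
      refine Finset.sum_congr rfl fun i _ => ?_
      rw [mul_add, Finset.mul_sum, sq]
    rw [expand]
    have part1 : ∑ i, (gv A J y i)^2 ≤ q^2 * Jb^2 * n * (∑ i, ∑ j, (A i j)^2) :=
      sum_gv_sq_le A J y Jb hJrs
    have part2 : ∑ i, ∑ j, gv A J y i * (K2c q Jb * |A i j| * (1 + gv A J y j))
        ≤ K2c q Jb * εA * ((Jb*(C*n)) * (n + Jb*(C*n))) := by
      have step1 : ∑ i, ∑ j, gv A J y i * (K2c q Jb * |A i j| * (1 + gv A J y j))
          ≤ ∑ i, ∑ j, gv A J y i * (K2c q Jb * εA * (1 + gv A J y j)) := by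
        refine Finset.sum_le_sum fun i _ => Finset.sum_le_sum fun j _ => ?_
        have g1 := gv_nonneg A J y i
        have g2 := gv_nonneg A J y j
        refine mul_le_mul_of_nonneg_left (mul_le_mul_of_nonneg_right
          (mul_le_mul_of_nonneg_left (hε i j) hK20) (by linarith)) g1
      refine le_trans step1 ?_
      have collapse : ∑ i, ∑ j, gv A J y i * (K2c q Jb * εA * (1 + gv A J y j))
          = (∑ i, gv A J y i) * (K2c q Jb * εA * ∑ j, (1 + gv A J y j)) := by
        have inner : ∀ i, ∑ j, gv A J y i * (K2c q Jb * εA * (1 + gv A J y j))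
            = gv A J y i * (K2c q Jb * εA * ∑ j, (1 + gv A J y j)) := by
          intro i; rw [← Finset.mul_sum, ← Finset.mul_sum]
        rw [Finset.sum_congr rfl fun i _ => inner i, ← Finset.sum_mul]
      rw [collapse]
      have hsum1 : ∑ j : Fin n, (1 + gv A J y j) = n + ∑ j, gv A J y j := by
        rw [Finset.sum_add_distrib]
        simp [Finset.sum_const, Finset.card_univ, nsmul_eq_mul]
      rw [hsum1]
      have hS0 : 0 ≤ ∑ i, gv A J y i := Finset.sum_nonneg fun i _ => gv_nonneg A J y i
      have hSb := hgv y
      have hn0 : (0:ℝ) ≤ n := Nat.cast_nonneg n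
      have hcε : 0 ≤ K2c q Jb * εA := mul_nonneg hK20 hε0
      have hM0 : 0 ≤ Jb * (C * n) := le_trans hS0 hSb
      nlinarith [mul_nonneg (mul_nonneg hcε (sub_nonneg.2 hSb)) hn0,
        mul_nonneg (mul_nonneg hcε (sub_nonneg.2 hSb)) (add_nonneg hM0 hS0)]
    linarith
  calc ∑ y : Fin n → Fin q, pottsWeight A J h y * (Tf A J h y)^2
      = ∑ i, ∑ y : Fin n → Fin q,
          pottsWeight A J h y * (fI A J h y i * (Tf A J h y - Ti A J h y i)) :=
        exp_sq_eq A J h hA hJ hd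
    _ ≤ ∑ i, ∑ y : Fin n → Fin q, pottsWeight A J h y * (gv A J y i * B y i) := by
        refine Finset.sum_le_sum fun i _ => Finset.sum_le_sum fun y _ => ?_
        refine mul_le_mul_of_nonneg_left ?_ (pottsWeight_nonneg A J h y)
        refine le_trans (le_abs_self _) ?_
        rw [abs_mul]
        exact mul_le_mul (abs_fI_le_gv A J h y i)
          (Tf_sub_Ti A J h hA hd Jb hJrs hA1 y i) (abs_nonneg _) (gv_nonneg A J y i)
    _ = ∑ y : Fin n → Fin q, pottsWeight A J h y * (∑ i, gv A J y i * B y i) := by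
        rw [Finset.sum_comm]
        exact Finset.sum_congr rfl fun y _ => by rw [← Finset.mul_sum]
    _ ≤ ∑ y : Fin n → Fin q, pottsWeight A J h y *
          (q^2 * Jb^2 * n * (∑ i, ∑ j, (A i j)^2)
            + K2c q Jb * εA * ((Jb*(C*n)) * (n + Jb*(C*n)))) := by
        refine Finset.sum_le_sum fun y _ => ?_
        exact mul_le_mul_of_nonneg_left (pointwise y) (pottsWeight_nonneg A J h y)
    _ = q^2 * Jb^2 * n * (∑ i, ∑ j, (A i j)^2)
          + K2c q Jb * εA * ((Jb*(C*n)) * (n + Jb*(C*n))) := by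
        rw [← Finset.sum_mul, pottsWeight_sum_one, one_mul]

theorem lemma_gamma_close
    (q : ℕ) (hq : 2 ≤ q) (J : Matrix (Fin q) (Fin q) ℝ) (hJ : J.IsSymm) (h : Fin q → ℝ)
    (A : (n : ℕ) → Matrix (Fin n) (Fin n) ℝ) (hsymm : ∀ n, (A n).IsSymm)
    (hMF : meanFieldAssumption A)
    (hdiag : ∀ n : ℕ, ∀ i : Fin n, A n i i = 0)
    (hmax : Tendsto (fun n : ℕ => ⨆ i : Fin n, ⨆ j : Fin n, |A n i j|) atTop (nhds 0)) :
    Tendsto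
      (fun n : ℕ =>
        (∑ y : Fin n → Fin q, pottsWeight (A n) J h y *
          (∑ i, ∑ r, (xVec y i r - xHat (A n) J h y i r) * gam (A n) J (xVec y) i r) ^ 2)
          / (n : ℝ) ^ 2)
      atTop (nhds 0) := by
  haveI : NeZero q := ⟨by omega⟩
  obtain ⟨C, hC⟩ := hMF.1
  set Jb : ℝ := ∑ r, ∑ s, |J r s| with hJbdef
  have hJrs : ∀ r t : Fin q, |J r t| ≤ Jb := by
    intro r t
    calc |J r t| ≤ ∑ s, |J r s| :=
          Finset.single_le_sum (f := fun s => |J r s|) (fun s _ => abs_nonneg _)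
            (Finset.mem_univ t)
      _ ≤ Jb := Finset.single_le_sum (f := fun r => ∑ s, |J r s|)
            (fun r _ => Finset.sum_nonneg fun s _ => abs_nonneg _) (Finset.mem_univ r)
  set ε : ℕ → ℝ := fun n => ⨆ i : Fin n, ⨆ j : Fin n, |A n i j| with hεdef
  have hεle : ∀ (n : ℕ) (i j : Fin n), |A n i j| ≤ ε n := by
    intro n i j
    have b1 : |A n i j| ≤ ⨆ j : Fin n, |A n i j| :=
      le_ciSup (f := fun j => |A n i j|) (Set.Finite.bddAbove (Set.finite_range _)) j
    have b2 : (⨆ j : Fin n, |A n i j|) ≤ ε n :=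
      le_ciSup (f := fun i => ⨆ j : Fin n, |A n i j|)
        (Set.Finite.bddAbove (Set.finite_range _)) i
    exact le_trans b1 b2
  have hε0 : ∀ n, 0 ≤ ε n := by
    intro n
    rcases Nat.eq_zero_or_pos n with rfl | hn
    · simp [hεdef]
    · exact le_trans (abs_nonneg _) (hεle n ⟨0, hn⟩ ⟨0, hn⟩)
  have htr : ∀ n, Matrix.trace (A n * A n) = ∑ i, ∑ j, (A n i j)^2 := by
    intro n
    have h1 : Matrix.trace (A n * A n) = ∑ i, ∑ j, A n i j * A n j i := by
      simp [Matrix.trace, Matrix.diag, Matrix.mul_apply]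
    rw [h1]
    refine Finset.sum_congr rfl fun i _ => Finset.sum_congr rfl fun j _ => ?_
    rw [(hsymm n).apply i j, sq]
  have hu0 : Tendsto (fun n : ℕ => (q:ℝ)^2*Jb^2*(Matrix.trace (A n * A n)/n)
      + (K2c q Jb * (Jb*C*(1+Jb*C))) * ε n) atTop (nhds 0) := by
    have t1 := hMF.2.const_mul ((q:ℝ)^2*Jb^2)
    have t2 := hmax.const_mul (K2c q Jb * (Jb*C*(1+Jb*C)))
    simpa using t1.add t2
  apply squeeze_zero' ?_ ?_ hu0
  · filter_upwards with n
    apply div_nonneg _ (by positivity)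
    exact Finset.sum_nonneg fun y _ =>
      mul_nonneg (pottsWeight_nonneg (A n) J h y) (sq_nonneg _)
  · have hev1 : ∀ᶠ n in atTop, ε n < 1 :=
      hmax.eventually_lt_const (by norm_num : (0:ℝ) < 1)
    filter_upwards [hev1, eventually_ge_atTop 1] with n hεn1 hn1
    have hnpos : (0:ℝ) < (n:ℝ) := by exact_mod_cast Nat.lt_of_lt_of_le Nat.zero_lt_one hn1
    have hn2 : (0:ℝ) < ((n:ℝ))^2 := by positivity
    have hgvsum : ∀ y : Fin n → Fin q, ∑ i, gv (A n) J y i ≤ Jb * (C * n) := by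
      intro y
      rw [hJbdef]
      exact sum_gv_le (A n) J C (hC n) y
    have hcb := core_bound (A n) J h (hsymm n) hJ (hdiag n) Jb C (ε n) hJrs hgvsum
      (hεle n) (hε0 n) hεn1.le
    have hTfe : (∑ y : Fin n → Fin q, pottsWeight (A n) J h y *
          (∑ i, ∑ r, (xVec y i r - xHat (A n) J h y i r) * gam (A n) J (xVec y) i r) ^ 2)
        = ∑ y : Fin n → Fin q, pottsWeight (A n) J h y * (Tf (A n) J h y)^2 := rfl
    rw [hTfe, htr n]
    refine le_trans ((div_le_div_iff_of_pos_right hn2).2 hcb) (le_of_eq ?_)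
    field_simp
end
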